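/- arXiv:1312.1480 — 2 statements merged into one kernel-verified Lean document; each statement's English description precedes it below -/
import Mathlib

section
/- Let S be the group ℤ₂ = {0,1}, and let G be a simple S-symmetric graph where the action θ : S → Aut(G) is free on both V(G) and E(G). Then G is (2,2)-tight if and only if its quotient S-gain graph G_0 is (2,2,1)-gain-tight. -/
open Matrix Real

noncomputable section

namespace SymSurf


/-- Vectors in `ℝ³`. -/
abbrev V3 : Type := Fin 3 → ℝ

/-- `3 × 3` real matrices. -/
abbrev Mat3 : Type := Matrix (Fin 3) (Fin 3) ℝ

/-- The Euclidean dot product on `ℝ³`. -/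
def dot3 (u v : V3) : ℝ := ∑ i, u i * v i

/-- The orthogonal group `O(3)` (unitary group of real `3 × 3` matrices). -/
abbrev OG := Matrix.unitaryGroup (Fin 3) ℝ

/-- The matrix of an element of a subgroup of `O(3)`. -/
def gmat {S : Subgroup OG} (g : S) : Mat3 := ((g : OG) : Mat3)

/-- A surface in `ℝ³`, given by its point set together with a choice of a normal
vector at every point. -/
structure Surf where
  carrier : Set V3
  normal : V3 → V3

/-- The unit sphere `x² + y² + z² = 1`, with its radial normal field. -/
def sphereSurf : Surf :=
  ⟨{p | p 0 ^ 2 + p 1 ^ 2 + p 2 ^ 2 = 1}, fun p => p⟩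

/-- The unit cylinder `x² + y² = 1` about the `z`-axis. -/
def cylSurf : Surf :=
  ⟨{p | p 0 ^ 2 + p 1 ^ 2 = 1}, fun p => ![p 0, p 1, 0]⟩

/-- The unit cone `x² + y² = z²` about the `z`-axis. -/
def coneSurf : Surf :=
  ⟨{p | p 0 ^ 2 + p 1 ^ 2 = p 2 ^ 2}, fun p => ![p 0, p 1, -p 2]⟩

/-- An action of a group on a simple graph by automorphisms which is free on the vertices. -/
def FreeGraphAction {Γ W : Type*} [Group Γ] (G : SimpleGraph W) (θ : Γ →* Equiv.Perm W) : Prop :=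
  (∀ (x : Γ) (u v : W), G.Adj u v ↔ G.Adj (θ x u) (θ x v)) ∧
  (∀ x : Γ, x ≠ 1 → ∀ v : W, θ x v ≠ v)

/-- `p` realises the graph `G` as an `S`-symmetric framework (with respect to the action `θ`)
supported on the surface `M`, with no joint fixed by a nontrivial element of `S`. -/
def IsSymFramework (M : Surf) {S : Subgroup OG} {W : Type*}
    (θ : S →* Equiv.Perm W) (G : SimpleGraph W) (p : W → V3) : Prop :=
  (∀ v, p v ∈ M.carrier) ∧
  (∀ u v, G.Adj u v → p u ≠ p v) ∧
  (∀ (x : S) (v : W), (gmat x).mulVec (p v) = p (θ x v)) ∧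
  (∀ x : S, x ≠ 1 → ∀ v : W, (gmat x).mulVec (p v) ≠ p v)

/-- An `S`-symmetric infinitesimal motion of the framework `(G, p)` on the surface `M`:
an assignment of tangential velocity vectors satisfying the first-order length constraints,
invariant under the symmetry group. -/
def IsSymMotion (M : Surf) {S : Subgroup OG} {W : Type*}
    (θ : S →* Equiv.Perm W) (G : SimpleGraph W) (p u : W → V3) : Prop :=
  (∀ v, dot3 (u v) (M.normal (p v)) = 0) ∧
  (∀ i j, G.Adj i j → dot3 (u i - u j) (p i - p j) = 0) ∧
  (∀ (x : S) (v : W), (gmat x).mulVec (u v) = u (θ x v))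

/-- `(A, b)` is an `S`-symmetric infinitesimal isometry of `ℝ³` (`A` skew-symmetric) which is
tangential to the surface `M`. -/
def IsSymTangIso (M : Surf) (S : Subgroup OG) (A : Mat3) (b : V3) : Prop :=
  Aᵀ = -A ∧
  (∀ q ∈ M.carrier, dot3 (A.mulVec q + b) (M.normal q) = 0) ∧
  (∀ (x : S) (q : V3), (gmat x).mulVec (A.mulVec q + b) = A.mulVec ((gmat x).mulVec q) + b)

/-- A motion is trivial when it is the restriction to the joints of an `S`-symmetric
infinitesimal isometry of `ℝ³` tangential to `M`. -/
def IsTrivialMotion (M : Surf) (S : Subgroup OG) {W : Type*} (p u : W → V3) : Prop :=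
  ∃ A b, IsSymTangIso M S A b ∧ ∀ v, u v = A.mulVec (p v) + b

/-- The orbit of an edge under the symmetry group action. -/
def edgeOrbit {S : Subgroup OG} {W : Type*} (θ : S →* Equiv.Perm W) (e : Sym2 W) :
    Set (Sym2 W) :=
  {e' | ∃ x : S, e' = Sym2.map (θ x) e}

/-- The framework `(G, p)` on `M` is `S`-isostatic : every `S`-symmetric infinitesimal motion
is trivial, and deleting any edge orbit destroys this property. -/
def SIsostatic (M : Surf) {S : Subgroup OG} {W : Type*}
    (θ : S →* Equiv.Perm W) (G : SimpleGraph W) (p : W → V3) : Prop :=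
  (∀ u, IsSymMotion M θ G p u → IsTrivialMotion M S p u) ∧
  (∀ e ∈ G.edgeSet, ∃ u, IsSymMotion M θ (G.deleteEdges (edgeOrbit θ e)) p u ∧
    ¬ IsTrivialMotion M S p u)

lemma dot3_add_left (u v w : V3) : dot3 (u + v) w = dot3 u w + dot3 v w := by
  simp [dot3, add_mul, Finset.sum_add_distrib]

lemma dot3_smul_left (c : ℝ) (u w : V3) : dot3 (c • u) w = c * dot3 u w := by
  simp [dot3, Finset.mul_sum, mul_assoc]

/-- The space of `S`-symmetric infinitesimal isometries of `ℝ³` tangential to `M`,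
as a submodule of pairs (skew-symmetric matrix, translation vector). -/
def symTangIsoSub (M : Surf) (S : Subgroup OG) : Submodule ℝ (Mat3 × V3) where
  carrier := {Ab | IsSymTangIso M S Ab.1 Ab.2}
  zero_mem' := by
    refine ⟨by simp, ?_, ?_⟩
    · intro q _
      simp [dot3, Matrix.zero_mulVec]
    · intro x q
      simp [Matrix.zero_mulVec, Matrix.mulVec_zero]
  add_mem' := by
    rintro ⟨A, b⟩ ⟨C, d⟩ ⟨hA1, hA2, hA3⟩ ⟨hC1, hC2, hC3⟩
    have key : ∀ q : V3, (A + C).mulVec q + (b + d) = (A.mulVec q + b) + (C.mulVec q + d) := by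
      intro q; rw [Matrix.add_mulVec]; abel
    refine ⟨?_, ?_, ?_⟩
    · show (A + C)ᵀ = -(A + C)
      rw [Matrix.transpose_add, hA1, hC1]; abel
    · intro q hq
      show dot3 ((A + C).mulVec q + (b + d)) (M.normal q) = 0
      rw [key q, dot3_add_left, hA2 q hq, hC2 q hq, add_zero]
    · intro x q
      show (gmat x).mulVec ((A + C).mulVec q + (b + d)) =
        (A + C).mulVec ((gmat x).mulVec q) + (b + d)
      rw [key q, Matrix.mulVec_add, hA3 x q, hC3 x q, key ((gmat x).mulVec q)]
  smul_mem' := by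
    rintro c ⟨A, b⟩ ⟨h1, h2, h3⟩
    have key : ∀ q : V3, (c • A).mulVec q + c • b = c • (A.mulVec q + b) := by
      intro q; rw [Matrix.smul_mulVec, smul_add]
    refine ⟨?_, ?_, ?_⟩
    · show (c • A)ᵀ = -(c • A)
      rw [Matrix.transpose_smul, h1, smul_neg]
    · intro q hq
      show dot3 ((c • A).mulVec q + c • b) (M.normal q) = 0
      rw [key q, dot3_smul_left, h2 q hq, mul_zero]
    · intro x q
      show (gmat x).mulVec ((c • A).mulVec q + c • b) =
        (c • A).mulVec ((gmat x).mulVec q) + c • b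
      rw [key q, Matrix.mulVec_smul, h3 x q, key ((gmat x).mulVec q)]

/-- The dimension of the space of `S`-symmetric infinitesimal isometries of `ℝ³`
tangential to `M` ("the symmetric type `k_S` of `M`"). -/
def kSym (M : Surf) (S : Subgroup OG) : ℕ := Module.finrank ℝ (symTangIsoSub M S)

/-- The type `k` of a surface: the dimension of the space of infinitesimal isometries of `ℝ³`
tangential to `M`. -/
def surfType (M : Surf) : ℕ := kSym M ⊥

/-- An irreducible algebraic surface in `ℝ³`: the zero set of an irreducible real polynomial
in three variables. -/
structure AlgSurface where
  poly : MvPolynomial (Fin 3) ℝ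
  irred : Irreducible poly

/-- The surface data (point set and gradient normal field) of an irreducible algebraic
surface. -/
def AlgSurface.toSurf (M : AlgSurface) : Surf :=
  ⟨{p | MvPolynomial.eval p M.poly = 0},
   fun p i => MvPolynomial.eval p (MvPolynomial.pderiv i M.poly)⟩

/-- A gain graph: a directed multigraph with edge set `E`, vertex set `V`, and a gain in the
group `Γ` on each edge. -/
structure GainGraph (Γ V E : Type*) [Group Γ] where
  tail : E → V
  head : E → V
  gain : E → Γ

variable {Γ V E : Type*} [Group Γ]

/-- Walks in a gain graph: edges may be traversed forwards or backwards. -/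
inductive GWalk (H : GainGraph Γ V E) : V → V → Type _
  | nil (v : V) : GWalk H v v
  | fwd (e : E) {w : V} : GWalk H (H.head e) w → GWalk H (H.tail e) w
  | bwd (e : E) {w : V} : GWalk H (H.tail e) w → GWalk H (H.head e) w

namespace GWalk

variable {H : GainGraph Γ V E}

/-- The gain of a walk: the product of the gains of its edges, inverting the gain of any edge
traversed against its orientation. -/
def gainOf : ∀ {u v : V}, GWalk H u v → Γ
  | _, _, nil _ => 1
  | _, _, fwd e w => H.gain e * gainOf w
  | _, _, bwd e w => (H.gain e)⁻¹ * gainOf w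

/-- The list of edges used by a walk. -/
def edgesOf : ∀ {u v : V}, GWalk H u v → List E
  | _, _, nil _ => []
  | _, _, fwd e w => e :: edgesOf w
  | _, _, bwd e w => e :: edgesOf w

end GWalk

namespace GainGraph

variable (H : GainGraph Γ V E)

/-- An edge set `F` of a gain graph is balanced if every closed walk using only edges of `F`
has identity gain (equivalently, every cycle in `F` has identity gain). -/
def Balanced (F : Set E) : Prop :=
  ∀ (v : V) (w : GWalk H v v), (∀ e ∈ w.edgesOf, e ∈ F) → w.gainOf = 1

/-- `⟨F⟩_v` : the set of gains of closed walks based at `v` using only edges of `F`. -/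
def gainsAt (F : Set E) (v : V) : Set Γ :=
  {g | ∃ w : GWalk H v v, (∀ e ∈ w.edgesOf, e ∈ F) ∧ w.gainOf = g}

/-- The gain labelling of `H` restricted to `F` is switching-equivalent to the trivial
(identity) gain labelling. -/
def SwitchTrivial (F : Set E) : Prop :=
  ∃ φ : V → Γ, ∀ e ∈ F, H.gain e = (φ (H.tail e))⁻¹ * φ (H.head e)

/-- The set `V(F)` of vertices spanned by an edge set `F`. -/
def vSpan [DecidableEq V] (F : Finset E) : Finset V :=
  F.image H.tail ∪ F.image H.head

/-- `H` is `(k, ℓ, m)`-gain-tight: `|E(H)| = k|V(H)| - m`, every nonempty balanced edge set `F`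
satisfies `|F| ≤ k|V(F)| - ℓ`, and every nonempty edge set `F` satisfies `|F| ≤ k|V(F)| - m`. -/
def GainTight [Fintype V] [Fintype E] [DecidableEq V] (k l m : ℤ) : Prop :=
  (Fintype.card E : ℤ) = k * (Fintype.card V : ℤ) - m ∧
  (∀ F : Finset E, F.Nonempty → H.Balanced ↑F →
    (F.card : ℤ) ≤ k * ((H.vSpan F).card : ℤ) - l) ∧
  (∀ F : Finset E, F.Nonempty → (F.card : ℤ) ≤ k * ((H.vSpan F).card : ℤ) - m)

/-- `e` is an edge from `u` to `w` with gain `g`, up to reversal of orientation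
(which inverts the gain). -/
def EdgeIs (e : E) (u w : V) (g : Γ) : Prop :=
  (H.tail e = u ∧ H.head e = w ∧ H.gain e = g) ∨
  (H.tail e = w ∧ H.head e = u ∧ H.gain e = g⁻¹)

/-- The covering graph of a gain graph, as a simple graph on `Γ × V`. -/
def cover : SimpleGraph (Γ × V) :=
  SimpleGraph.fromRel (fun a b =>
    ∃ e : E, a.2 = H.tail e ∧ b.2 = H.head e ∧ b.1 = a.1 * H.gain e)

/-- The covering (multi-)graph of a gain graph is simple: no edge lifts to a loop, and
distinct lifted edges are distinct. -/
def CoverSimple : Prop :=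
  (∀ e : E, ¬ (H.tail e = H.head e ∧ H.gain e = 1)) ∧
  Function.Injective (fun q : Γ × E =>
    s(((q.1, H.tail q.2) : Γ × V), ((q.1 * H.gain q.2, H.head q.2) : Γ × V)))

end GainGraph

/-- `H` is (a presentation of) the quotient `Γ`-gain graph of the `Γ`-symmetric graph `G`:
its covering graph is simple and there is an isomorphism from the covering graph to `G`
which intertwines the natural action on the cover with the action `θ`. -/
def IsQuotientOf {W : Type*} (G : SimpleGraph W) {Γ : Type*} [Group Γ]
    (θ : Γ →* Equiv.Perm W) {V E : Type*} (H : GainGraph Γ V E) : Prop :=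
  H.CoverSimple ∧
  ∃ φ : H.cover ≃g G, ∀ (x y : Γ) (v : V), φ (x * y, v) = θ x (φ (y, v))

/-- Transcendence degree of the subfield `L` of `ℝ` over its subfield `K`:
the supremum of the cardinalities of the `K`-algebraically independent subsets of `L`. -/
def subfieldTrdeg (K L : Subfield ℝ) (h : K ≤ L) : Cardinal :=
  letI : Algebra K L := (Subfield.inclusion h).toAlgebra
  ⨆ s : {s : Set L // AlgebraicIndependent K ((↑) : s → L)}, Cardinal.mk s.1

/-- The set of all entries of the matrices of the symmetry group `S`. -/
def entriesOf (S : Subgroup OG) : Set ℝ :=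
  {r | ∃ (x : S) (i j : Fin 3), gmat x i j = r}

/-- The set of all coordinates of the joints of a configuration `p`. -/
def coordsOf {W : Type*} (p : W → V3) : Set ℝ :=
  {r | ∃ (v : W) (i : Fin 3), p v i = r}

/-- `ℚ_S`: the subfield of `ℝ` generated by the entries of the matrices in `S`. -/
def QS (S : Subgroup OG) : Subfield ℝ := Subfield.closure (entriesOf S)

/-- `ℚ_S(p)`: the subfield of `ℝ` generated by the entries of the matrices in `S` together
with the coordinates of `p`. -/
def QSp (S : Subgroup OG) {W : Type*} (p : W → V3) : Subfield ℝ :=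
  Subfield.closure (entriesOf S ∪ coordsOf p)

/-- `p` is `S`-generic (for a quotient gain graph with `n` vertices):
the transcendence degree of `ℚ_S(p)` over `ℚ_S` equals `2n`. -/
def SGeneric (S : Subgroup OG) {W : Type*} (p : W → V3) (n : ℕ) : Prop :=
  subfieldTrdeg (QS S) (QSp S p) (Subfield.closure_mono Set.subset_union_left) = (2 * n : ℕ)

/-- The cross-product matrix of an axis vector. -/
def crossMat (a : V3) : Mat3 :=
  !![0, -a 2, a 1; a 2, 0, -a 0; -a 1, a 0, 0]

/-- Rotation by angle `θ` about the axis `a` through the origin (Rodrigues formula). -/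
def rotMat (a : V3) (θ : ℝ) : Mat3 :=
  Real.cos θ • (1 : Mat3) + Real.sin θ • crossMat a +
    (1 - Real.cos θ) • Matrix.vecMulVec a a

/-- Reflection in the plane through the origin with unit normal `n`. -/
def reflMat (n : V3) : Mat3 := 1 - (2 : ℝ) • Matrix.vecMulVec n n

/-- The unit vector along the `z`-axis. -/
def ez : V3 := ![0, 0, 1]

/-- `S` is the cyclic group `C_m` generated by the rotation about the axis `a`
through the origin by `2π/m`. -/
def IsRotationGroup (S : Subgroup OG) (a : V3) (m : ℕ) : Prop :=
  1 ≤ m ∧ dot3 a a = 1 ∧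
  ∃ x : OG, (x : Mat3) = rotMat a (2 * Real.pi / m) ∧ S = Subgroup.zpowers x

/-- `S` is the group `C_s` generated by the reflection in the plane through the origin
with unit normal `n`. -/
def IsReflectionGroup (S : Subgroup OG) (n : V3) : Prop :=
  dot3 n n = 1 ∧ ∃ x : OG, (x : Mat3) = reflMat n ∧ S = Subgroup.zpowers x

/-- `S` is the group `C_i` generated by the inversion `x ↦ -x` in the origin. -/
def IsInversionGroup (S : Subgroup OG) : Prop :=
  ∃ x : OG, (x : Mat3) = (-1 : Mat3) ∧ S = Subgroup.zpowers x

/-- `S` is the group `C_mh`, generated by the `m`-fold rotation about the axis `a` and the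
reflection in the plane through the origin perpendicular to `a`. -/
def IsCmh (S : Subgroup OG) (a : V3) (m : ℕ) : Prop :=
  1 ≤ m ∧ dot3 a a = 1 ∧
  ∃ x y : OG, (x : Mat3) = rotMat a (2 * Real.pi / m) ∧ (y : Mat3) = reflMat a ∧
    S = Subgroup.closure {x, y}

/-- `S` is the group `S_2m`, generated by the `2m`-fold improper rotation about the axis
`a` (rotation by `π/m` followed by the reflection in the perpendicular plane). -/
def IsS2m (S : Subgroup OG) (a : V3) (m : ℕ) : Prop :=
  1 ≤ m ∧ dot3 a a = 1 ∧
  ∃ x : OG, (x : Mat3) = reflMat a * rotMat a (Real.pi / m) ∧ S = Subgroup.zpowers x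

/-- `S` is the dihedral group `C_mv`, generated by the `m`-fold rotation about the axis `a`
and a reflection in a plane containing this axis (i.e. with unit normal `n ⟂ a`). -/
def IsCmv (S : Subgroup OG) (a n : V3) (m : ℕ) : Prop :=
  1 ≤ m ∧ dot3 a a = 1 ∧ dot3 n n = 1 ∧ dot3 a n = 0 ∧
  ∃ x y : OG, (x : Mat3) = rotMat a (2 * Real.pi / m) ∧ (y : Mat3) = reflMat n ∧
    S = Subgroup.closure {x, y}

section Moves

variable {Γ : Type*} [Group Γ] {V E : Type*}

/-- Henneberg move H1a: add a new vertex together with two non-loop, non-parallel edges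
incident with it, with arbitrary gains. -/
def IsH1a (H : GainGraph Γ V E) (H' : GainGraph Γ (Option V) (E ⊕ Fin 2)) : Prop :=
  (∀ e : E, H'.tail (Sum.inl e) = some (H.tail e) ∧ H'.head (Sum.inl e) = some (H.head e) ∧
    H'.gain (Sum.inl e) = H.gain e) ∧
  (∀ i : Fin 2, H'.head (Sum.inr i) = none) ∧
  (∃ a b : V, a ≠ b ∧ H'.tail (Sum.inr 0) = some a ∧ H'.tail (Sum.inr 1) = some b)

/-- Henneberg move H1b: add a new vertex together with two parallel edges (directed to the
new vertex) with distinct gains. -/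
def IsH1b (H : GainGraph Γ V E) (H' : GainGraph Γ (Option V) (E ⊕ Fin 2)) : Prop :=
  (∀ e : E, H'.tail (Sum.inl e) = some (H.tail e) ∧ H'.head (Sum.inl e) = some (H.head e) ∧
    H'.gain (Sum.inl e) = H.gain e) ∧
  (∀ i : Fin 2, H'.head (Sum.inr i) = none) ∧
  (∃ a : V, H'.tail (Sum.inr 0) = some a ∧ H'.tail (Sum.inr 1) = some a) ∧
  H'.gain (Sum.inr 0) ≠ H'.gain (Sum.inr 1)

/-- Henneberg move H1c: add a new vertex together with a loop with non-identity gain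
and one non-loop edge. -/
def IsH1c (H : GainGraph Γ V E) (H' : GainGraph Γ (Option V) (E ⊕ Fin 2)) : Prop :=
  (∀ e : E, H'.tail (Sum.inl e) = some (H.tail e) ∧ H'.head (Sum.inl e) = some (H.head e) ∧
    H'.gain (Sum.inl e) = H.gain e) ∧
  H'.tail (Sum.inr 0) = none ∧ H'.head (Sum.inr 0) = none ∧ H'.gain (Sum.inr 0) ≠ 1 ∧
  (∃ a : V, H'.tail (Sum.inr 1) = some a) ∧ H'.head (Sum.inr 1) = none

/-- The general Henneberg 2 move: delete the edge `e₀`, subdivide it by a new vertex into two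
edges whose gains compose to the gain of `e₀`, and add a third edge from `z` to the new vertex
such that every 2-cycle among the three new edges is unbalanced. -/
def IsH2 (H : GainGraph Γ V E) (e₀ : E) (z : V)
    (H' : GainGraph Γ (Option V) ({f : E // f ≠ e₀} ⊕ Fin 3)) : Prop :=
  (∀ f : {f : E // f ≠ e₀}, H'.tail (Sum.inl f) = some (H.tail f.1) ∧
    H'.head (Sum.inl f) = some (H.head f.1) ∧ H'.gain (Sum.inl f) = H.gain f.1) ∧
  (∀ i : Fin 3, H'.head (Sum.inr i) = none) ∧
  H'.tail (Sum.inr 0) = some (H.tail e₀) ∧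
  H'.tail (Sum.inr 1) = some (H.head e₀) ∧
  H'.gain (Sum.inr 0) * (H'.gain (Sum.inr 1))⁻¹ = H.gain e₀ ∧
  H'.tail (Sum.inr 2) = some z ∧
  (∀ i j : Fin 3, i ≠ j → H'.tail (Sum.inr i) = H'.tail (Sum.inr j) →
    H'.gain (Sum.inr i) ≠ H'.gain (Sum.inr j))

/-- Henneberg move H2a: the subdivided edge is not a loop, `z` not one of its endpoints. -/
def IsH2a (H : GainGraph Γ V E) (e₀ : E) (z : V)
    (H' : GainGraph Γ (Option V) ({f : E // f ≠ e₀} ⊕ Fin 3)) : Prop :=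
  H.tail e₀ ≠ H.head e₀ ∧ z ≠ H.tail e₀ ∧ z ≠ H.head e₀ ∧ IsH2 H e₀ z H'

/-- Henneberg move H2b: the subdivided edge is not a loop, `z` one of its endpoints. -/
def IsH2b (H : GainGraph Γ V E) (e₀ : E) (z : V)
    (H' : GainGraph Γ (Option V) ({f : E // f ≠ e₀} ⊕ Fin 3)) : Prop :=
  H.tail e₀ ≠ H.head e₀ ∧ (z = H.tail e₀ ∨ z = H.head e₀) ∧ IsH2 H e₀ z H'

/-- Henneberg move H2c: the subdivided edge is a loop, `z` not its vertex. -/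
def IsH2c (H : GainGraph Γ V E) (e₀ : E) (z : V)
    (H' : GainGraph Γ (Option V) ({f : E // f ≠ e₀} ⊕ Fin 3)) : Prop :=
  H.tail e₀ = H.head e₀ ∧ z ≠ H.tail e₀ ∧ IsH2 H e₀ z H'

/-- Henneberg move H2d: the subdivided edge is a loop, `z` its vertex. -/
def IsH2d (H : GainGraph Γ V E) (e₀ : E) (z : V)
    (H' : GainGraph Γ (Option V) ({f : E // f ≠ e₀} ⊕ Fin 3)) : Prop :=
  H.tail e₀ = H.head e₀ ∧ z = H.tail e₀ ∧ IsH2 H e₀ z H'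

/-- Tails of the six edges of `K₄` on four vertices. -/
def k4t : Fin 6 → Fin 4 := ![0, 0, 0, 1, 1, 2]

/-- Heads of the six edges of `K₄` on four vertices. -/
def k4h : Fin 6 → Fin 4 := ![1, 2, 3, 2, 3, 3]

/-- The vertex-to-`K₄` move at `v`: remove `v` and its incident edges, add a copy of `K₄`
with identity gains on all six edges, and reattach every removed edge at one of the new `K₄`
vertices, keeping its gain. -/
def IsVtoK4 (H : GainGraph Γ V E) (v : V)
    (H' : GainGraph Γ ({w : V // w ≠ v} ⊕ Fin 4) (E ⊕ Fin 6)) : Prop :=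
  ∃ σ : E → Fin 4,
    (∀ e : E,
      H'.gain (Sum.inl e) = H.gain e ∧
      (H.tail e = v → H'.tail (Sum.inl e) = Sum.inr (σ e)) ∧
      (∀ h : H.tail e ≠ v, H'.tail (Sum.inl e) = Sum.inl ⟨H.tail e, h⟩) ∧
      (H.head e = v → H'.head (Sum.inl e) = Sum.inr (σ e)) ∧
      (∀ h : H.head e ≠ v, H'.head (Sum.inl e) = Sum.inl ⟨H.head e, h⟩)) ∧
    (∀ i : Fin 6, H'.tail (Sum.inr i) = Sum.inr (k4t i) ∧ H'.head (Sum.inr i) = Sum.inr (k4h i) ∧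
      H'.gain (Sum.inr i) = 1)

/-- The vertex-to-4-cycle move at `v` (splitting `v` into `v₁, v₂` along the edges
`ea = (a,v)_α` and `eb = (b,v)_β`): the two chosen edges are doubled into the 4-cycle
`(a,v₁)_α, (a,v₂)_α, (b,v₁)_β, (b,v₂)_β`, and every other edge incident with `v` is
reattached at `v₁` or `v₂`, keeping its gain. -/
def IsVto4C (H : GainGraph Γ V E) (v : V) (ea eb : E)
    (H' : GainGraph Γ ({w : V // w ≠ v} ⊕ Fin 2) ({e : E // e ≠ ea ∧ e ≠ eb} ⊕ Fin 4)) : Prop :=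
  ea ≠ eb ∧
  ∃ (a b : V) (ha : a ≠ v) (hb : b ≠ v) (α β : Γ) (σ : E → Fin 2),
    H.EdgeIs ea a v α ∧ H.EdgeIs eb b v β ∧
    H'.EdgeIs (Sum.inr 0) (Sum.inl ⟨a, ha⟩) (Sum.inr 0) α ∧
    H'.EdgeIs (Sum.inr 1) (Sum.inl ⟨a, ha⟩) (Sum.inr 1) α ∧
    H'.EdgeIs (Sum.inr 2) (Sum.inl ⟨b, hb⟩) (Sum.inr 0) β ∧
    H'.EdgeIs (Sum.inr 3) (Sum.inl ⟨b, hb⟩) (Sum.inr 1) β ∧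
    ∀ e : {e : E // e ≠ ea ∧ e ≠ eb},
      H'.gain (Sum.inl e) = H.gain e.1 ∧
      (H.tail e.1 = v → H'.tail (Sum.inl e) = Sum.inr (σ e.1)) ∧
      (∀ h : H.tail e.1 ≠ v, H'.tail (Sum.inl e) = Sum.inl ⟨H.tail e.1, h⟩) ∧
      (H.head e.1 = v → H'.head (Sum.inl e) = Sum.inr (σ e.1)) ∧
      (∀ h : H.head e.1 ≠ v, H'.head (Sum.inl e) = Sum.inl ⟨H.head e.1, h⟩)

/-- The edge joining operation: the disjoint union of two gain graphs together with one new
connecting edge with arbitrary gain. -/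
def IsEdgeJoin {V₁ E₁ V₂ E₂ : Type*} (H₁ : GainGraph Γ V₁ E₁) (H₂ : GainGraph Γ V₂ E₂)
    (H : GainGraph Γ (V₁ ⊕ V₂) (E₁ ⊕ E₂ ⊕ Unit)) : Prop :=
  (∀ e : E₁, H.tail (Sum.inl e) = Sum.inl (H₁.tail e) ∧
    H.head (Sum.inl e) = Sum.inl (H₁.head e) ∧ H.gain (Sum.inl e) = H₁.gain e) ∧
  (∀ e : E₂, H.tail (Sum.inr (Sum.inl e)) = Sum.inr (H₂.tail e) ∧
    H.head (Sum.inr (Sum.inl e)) = Sum.inr (H₂.head e) ∧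
    H.gain (Sum.inr (Sum.inl e)) = H₂.gain e) ∧
  (∃ (a : V₁) (b : V₂),
    (H.tail (Sum.inr (Sum.inr ())) = Sum.inl a ∧ H.head (Sum.inr (Sum.inr ())) = Sum.inr b) ∨
    (H.tail (Sum.inr (Sum.inr ())) = Sum.inr b ∧ H.head (Sum.inr (Sum.inr ())) = Sum.inl a))

end Moves

section Bundled

variable (Γ : Type) [Group Γ]

/-- A gain graph bundled together with its vertex and edge types. -/
structure BGG where
  V : Type
  E : Type
  gg : GainGraph Γ V E

variable {Γ}

/-- Isomorphism of gain graphs: bijections on vertices and edges preserving incidence and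
gains (up to reversal of edge orientations). -/
def GGIso {V E V' E' : Type*} (H : GainGraph Γ V E) (H' : GainGraph Γ V' E') : Prop :=
  ∃ (fV : V ≃ V') (fE : E ≃ E'),
    ∀ e : E, H'.EdgeIs (fE e) (fV (H.tail e)) (fV (H.head e)) (H.gain e)

/-- A Henneberg 1a step between bundled gain graphs. -/
def StepH1a (X Y : BGG Γ) : Prop :=
  ∃ H' : GainGraph Γ (Option X.V) (X.E ⊕ Fin 2), IsH1a X.gg H' ∧ GGIso H' Y.gg

/-- A Henneberg 1b step between bundled gain graphs. -/
def StepH1b (X Y : BGG Γ) : Prop :=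
  ∃ H' : GainGraph Γ (Option X.V) (X.E ⊕ Fin 2), IsH1b X.gg H' ∧ GGIso H' Y.gg

/-- A Henneberg 1c step between bundled gain graphs. -/
def StepH1c (X Y : BGG Γ) : Prop :=
  ∃ H' : GainGraph Γ (Option X.V) (X.E ⊕ Fin 2), IsH1c X.gg H' ∧ GGIso H' Y.gg

/-- A Henneberg 2a step between bundled gain graphs. -/
def StepH2a (X Y : BGG Γ) : Prop :=
  ∃ (e₀ : X.E) (z : X.V) (H' : GainGraph Γ (Option X.V) ({f : X.E // f ≠ e₀} ⊕ Fin 3)),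
    IsH2a X.gg e₀ z H' ∧ GGIso H' Y.gg

/-- A Henneberg 2b step between bundled gain graphs. -/
def StepH2b (X Y : BGG Γ) : Prop :=
  ∃ (e₀ : X.E) (z : X.V) (H' : GainGraph Γ (Option X.V) ({f : X.E // f ≠ e₀} ⊕ Fin 3)),
    IsH2b X.gg e₀ z H' ∧ GGIso H' Y.gg

/-- A Henneberg 2c step between bundled gain graphs. -/
def StepH2c (X Y : BGG Γ) : Prop :=
  ∃ (e₀ : X.E) (z : X.V) (H' : GainGraph Γ (Option X.V) ({f : X.E // f ≠ e₀} ⊕ Fin 3)),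
    IsH2c X.gg e₀ z H' ∧ GGIso H' Y.gg

/-- A Henneberg 2d step between bundled gain graphs. -/
def StepH2d (X Y : BGG Γ) : Prop :=
  ∃ (e₀ : X.E) (z : X.V) (H' : GainGraph Γ (Option X.V) ({f : X.E // f ≠ e₀} ⊕ Fin 3)),
    IsH2d X.gg e₀ z H' ∧ GGIso H' Y.gg

/-- A vertex-to-`K₄` step between bundled gain graphs. -/
def StepVtoK4 (X Y : BGG Γ) : Prop :=
  ∃ (v : X.V) (H' : GainGraph Γ ({w : X.V // w ≠ v} ⊕ Fin 4) (X.E ⊕ Fin 6)),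
    IsVtoK4 X.gg v H' ∧ GGIso H' Y.gg

/-- A vertex-to-4-cycle step between bundled gain graphs. -/
def StepVto4C (X Y : BGG Γ) : Prop :=
  ∃ (v : X.V) (ea eb : X.E)
    (H' : GainGraph Γ ({w : X.V // w ≠ v} ⊕ Fin 2) ({e : X.E // e ≠ ea ∧ e ≠ eb} ⊕ Fin 4)),
    IsVto4C X.gg v ea eb H' ∧ GGIso H' Y.gg

/-- An edge joining step combining two bundled gain graphs. -/
def StepJoin (X Y Z : BGG Γ) : Prop :=
  ∃ H : GainGraph Γ (X.V ⊕ Y.V) (X.E ⊕ Y.E ⊕ Unit), IsEdgeJoin X.gg Y.gg H ∧ GGIso H Z.gg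

/-- The gain graphs constructible from the base graphs by the given (unary) construction
steps and the given (binary) joining steps. -/
inductive Constructed (base : BGG Γ → Prop) (step : BGG Γ → BGG Γ → Prop)
    (join : BGG Γ → BGG Γ → BGG Γ → Prop) : BGG Γ → Prop
  | base_mem {X : BGG Γ} : base X → Constructed base step join X
  | step_mem {X Y : BGG Γ} : Constructed base step join X → step X Y →
      Constructed base step join Y
  | join_mem {X Y Z : BGG Γ} : Constructed base step join X → Constructed base step join Y →
      join X Y Z → Constructed base step join Z

/-- `K₂`: a single edge with gain `g`. -/
def K2gg (g : Γ) : GainGraph Γ (Fin 2) Unit := ⟨fun _ => 0, fun _ => 1, fun _ => g⟩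

/-- `K₁`: a single vertex with no edges. -/
def K1gg : GainGraph Γ (Fin 1) Empty := ⟨fun e => e.elim, fun e => e.elim, fun e => e.elim⟩

/-- A single vertex carrying a loop with gain `g`. -/
def loopGG (g : Γ) : GainGraph Γ (Fin 1) Unit := ⟨fun _ => 0, fun _ => 0, fun _ => g⟩

/-- `K₄ + e`: a copy of `K₄` with identity gains together with one extra edge from `u` to `w`
with gain `g`. -/
def k4eGG (u w : Fin 4) (g : Γ) : GainGraph Γ (Fin 4) (Fin 6 ⊕ Unit) :=
  ⟨fun e => match e with | Sum.inl i => k4t i | Sum.inr _ => u,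
   fun e => match e with | Sum.inl i => k4h i | Sum.inr _ => w,
   fun e => match e with | Sum.inl _ => 1 | Sum.inr _ => g⟩

/-- Tails of the nine edges of `K₅ - e`. -/
def k5t : Fin 9 → Fin 5 := ![0, 0, 0, 0, 1, 1, 1, 2, 2]

/-- Heads of the nine edges of `K₅ - e`. -/
def k5h : Fin 9 → Fin 5 := ![1, 2, 3, 4, 2, 3, 4, 3, 4]

/-- `K₅ - e` with identity gain on every edge. -/
def k5eGG : GainGraph Γ (Fin 5) (Fin 9) := ⟨k5t, k5h, fun _ => 1⟩

end Bundled

/-- The canonical left action of `Γ` on the vertex set `Γ × V` of a covering graph. -/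
def coverAction (Γ : Type*) [Group Γ] (V : Type*) : Γ →* Equiv.Perm (Γ × V) where
  toFun x := Equiv.prodCongr (Equiv.mulLeft x) (Equiv.refl V)
  map_one' := by
    ext ⟨y, v⟩ <;> simp
  map_mul' x₁ x₂ := by
    ext ⟨y, v⟩ <;> simp [mul_assoc]

/-- The orbit-surface rigidity matrix of a gain graph `H` with configuration `q` of the
orbit representatives on the surface `M`. -/
def orbitSurfMat (M : Surf) {S : Subgroup OG} {V E : Type*} [DecidableEq V]
    (H : GainGraph S V E) (q : V → V3) : Matrix (E ⊕ V) (V × Fin 3) ℝ :=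
  fun r c =>
    match r with
    | Sum.inl e =>
        (if c.1 = H.tail e then (q (H.tail e) - (gmat (H.gain e)).mulVec (q (H.head e))) c.2
          else 0) +
        (if c.1 = H.head e then (q (H.head e) - (gmat ((H.gain e)⁻¹)).mulVec (q (H.tail e))) c.2
          else 0)
    | Sum.inr v => if c.1 = v then M.normal (q v) c.2 else 0

/-- `p` is an `S`-regular realisation: the orbit-surface rigidity matrix (with respect to the
quotient gain graph `H`, whose vertices are represented in `G` by `rep`) has maximal rank
among all `S`-symmetric realisations of `G` on `M`. -/
def SRegularWith (M : Surf) {S : Subgroup OG} {V E W : Type*}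
    [Fintype V] [Fintype E] [DecidableEq V]
    (H : GainGraph S V E) (θ : S →* Equiv.Perm W) (G : SimpleGraph W)
    (rep : V → W) (p : W → V3) : Prop :=
  ∀ q : W → V3, IsSymFramework M θ G q →
    (orbitSurfMat M H (fun v => q (rep v))).rank ≤ (orbitSurfMat M H (fun v => p (rep v))).rank

/-- The set of vertices covered by a finite set of undirected edges. -/
def sym2Support {W : Type*} [Fintype W] [DecidableEq W] (F : Finset (Sym2 W)) : Finset W :=
  Finset.univ.filter fun w => ∃ e ∈ F, w ∈ e

/-- A simple graph is `(2,2)`-tight: `|E| = 2|V| - 2` and every nonempty edge subset `F`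
satisfies `|F| ≤ 2|V(F)| - 2`. -/
def TwoTwoTight {W : Type*} [Fintype W] [DecidableEq W] (G : SimpleGraph W)
    [DecidableRel G.Adj] : Prop :=
  ((G.edgeFinset.card : ℤ) = 2 * (Fintype.card W : ℤ) - 2) ∧
  ∀ F : Finset (Sym2 W), F.Nonempty → F ⊆ G.edgeFinset →
    (F.card : ℤ) ≤ 2 * ((sym2Support F).card : ℤ) - 2

section Deg3

variable {Γ V E : Type*} [Group Γ]

/-- `w` is a neighbour of `v` in the gain graph `H`. -/
def GainGraph.Nbr (H : GainGraph Γ V E) (v w : V) : Prop :=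
  ∃ e : E, (H.tail e = v ∧ H.head e = w) ∨ (H.tail e = w ∧ H.head e = v)

/-- The edges `es` form a copy of `K₄` on the four (distinct) vertices `v₀, v₁, v₂, v₃`. -/
def GainGraph.IsK4On (H : GainGraph Γ V E) (v₀ v₁ v₂ v₃ : V) (es : Fin 6 → E) : Prop :=
  Function.Injective ![v₀, v₁, v₂, v₃] ∧ Function.Injective es ∧
  ∀ i : Fin 6, ∃ g : Γ,
    H.EdgeIs (es i) (![v₀, v₁, v₂, v₃] (k4t i)) (![v₀, v₁, v₂, v₃] (k4h i)) g

/-- The inverse Henneberg 2a move at `v`: delete `v` together with all edges incident with it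
and add one new edge from `x` to `y` (two neighbours of `v`). -/
def IsInvH2a (H : GainGraph Γ V E) (v x y : V) (hx : x ≠ v) (hy : y ≠ v)
    (H' : GainGraph Γ {w : V // w ≠ v} ({e : E // H.tail e ≠ v ∧ H.head e ≠ v} ⊕ Unit)) :
    Prop :=
  (∀ e : {e : E // H.tail e ≠ v ∧ H.head e ≠ v},
    H'.tail (Sum.inl e) = ⟨H.tail e.1, e.2.1⟩ ∧ H'.head (Sum.inl e) = ⟨H.head e.1, e.2.2⟩ ∧
    H'.gain (Sum.inl e) = H.gain e.1) ∧
  H'.tail (Sum.inr ()) = ⟨x, hx⟩ ∧ H'.head (Sum.inr ()) = ⟨y, hy⟩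

end Deg3



/-! ### Auxiliary material for Statement 8 -/

section WalkAux

variable {Γ V E : Type*} [Group Γ]

namespace GWalk

variable {H : GainGraph Γ V E}

/-- Concatenation of walks. -/
def append : ∀ {u v w : V}, GWalk H u v → GWalk H v w → GWalk H u w
  | _, _, _, nil _, q => q
  | _, _, _, fwd e p, q => fwd e (append p q)
  | _, _, _, bwd e p, q => bwd e (append p q)

/-- Reversal of a walk. -/
def reverse : ∀ {u v : V}, GWalk H u v → GWalk H v u
  | _, _, nil v => nil v
  | _, _, fwd e p => append (reverse p) (bwd e (nil _))
  | _, _, bwd e p => append (reverse p) (fwd e (nil _))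

lemma gainOf_append : ∀ {u v w : V} (p : GWalk H u v) (q : GWalk H v w),
    (p.append q).gainOf = p.gainOf * q.gainOf
  | _, _, _, nil _, q => by simp [append, gainOf]
  | _, _, _, fwd e p, q => by simp [append, gainOf, gainOf_append p q, mul_assoc]
  | _, _, _, bwd e p, q => by simp [append, gainOf, gainOf_append p q, mul_assoc]

lemma edgesOf_append : ∀ {u v w : V} (p : GWalk H u v) (q : GWalk H v w),
    (p.append q).edgesOf = p.edgesOf ++ q.edgesOf
  | _, _, _, nil _, q => by simp [append, edgesOf]
  | _, _, _, fwd e p, q => by simp [append, edgesOf, edgesOf_append p q]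
  | _, _, _, bwd e p, q => by simp [append, edgesOf, edgesOf_append p q]

lemma gainOf_reverse : ∀ {u v : V} (p : GWalk H u v), p.reverse.gainOf = p.gainOf⁻¹
  | _, _, nil _ => by simp [reverse, gainOf]
  | _, _, fwd e p => by
      simp [reverse, gainOf_append, gainOf, gainOf_reverse p, _root_.mul_inv_rev]
  | _, _, bwd e p => by
      simp [reverse, gainOf_append, gainOf, gainOf_reverse p, _root_.mul_inv_rev]

lemma edgesOf_reverse : ∀ {u v : V} (p : GWalk H u v) (e : E),
    e ∈ p.reverse.edgesOf ↔ e ∈ p.edgesOf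
  | _, _, nil _, e => by simp [reverse, edgesOf]
  | _, _, fwd f p, e => by
      simp [reverse, edgesOf_append, edgesOf, edgesOf_reverse p e, or_comm]
  | _, _, bwd f p, e => by
      simp [reverse, edgesOf_append, edgesOf, edgesOf_reverse p e, or_comm]

end GWalk

/-- Switching-trivial gain labellings are balanced. -/
lemma GainGraph.SwitchTrivial.balanced {H : GainGraph Γ V E} {F : Set E}
    (h : H.SwitchTrivial F) : H.Balanced F := by
  obtain ⟨φ, hφ⟩ := h
  have key : ∀ {u v : V} (w : GWalk H u v), (∀ e ∈ w.edgesOf, e ∈ F) →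
      w.gainOf = (φ u)⁻¹ * φ v := by
    intro u v w
    induction w with
    | nil v => intro _; simp [GWalk.gainOf]
    | fwd e p ih =>
        intro hmem
        have he : e ∈ F := hmem e (by simp [GWalk.edgesOf])
        have hp := ih (fun f hf => hmem f (by simp [GWalk.edgesOf, hf]))
        simp [GWalk.gainOf, hp, hφ e he, mul_assoc]
    | bwd e p ih =>
        intro hmem
        have he : e ∈ F := hmem e (by simp [GWalk.edgesOf])
        have hp := ih (fun f hf => hmem f (by simp [GWalk.edgesOf, hf]))
        simp [GWalk.gainOf, hp, hφ e he, mul_assoc, _root_.mul_inv_rev]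
  intro v w hw
  rw [key w hw, inv_mul_cancel]

/-- Balanced gain labellings are switching-trivial. -/
lemma GainGraph.Balanced.switchTrivial {H : GainGraph Γ V E} {F : Set E}
    (h : H.Balanced F) : H.SwitchTrivial F := by
  classical
  letI s : Setoid V :=
    ⟨fun u v => ∃ w : GWalk H u v, ∀ e ∈ w.edgesOf, e ∈ F,
      ⟨fun v => ⟨GWalk.nil v, by simp [GWalk.edgesOf]⟩,
       fun {u v} hw => by
        obtain ⟨w, hw⟩ := hw
        exact ⟨w.reverse, fun e he => hw e ((GWalk.edgesOf_reverse w e).1 he)⟩,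
       fun {u v w} h1 h2 => by
        obtain ⟨p, hp⟩ := h1
        obtain ⟨q, hq⟩ := h2
        refine ⟨p.append q, fun e he => ?_⟩
        rw [GWalk.edgesOf_append, List.mem_append] at he
        exact he.elim (hp e) (hq e)⟩⟩
  have hout : ∀ v : V, ∃ w : GWalk H (⟦v⟧ : Quotient s).out v, ∀ e ∈ w.edgesOf, e ∈ F :=
    fun v => Quotient.mk_out v
  refine ⟨fun v => (hout v).choose.gainOf, fun e he => ?_⟩
  have hsame : (⟦H.tail e⟧ : Quotient s) = (⟦H.head e⟧ : Quotient s) := by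
    refine Quotient.sound ⟨GWalk.fwd e (GWalk.nil _), ?_⟩
    simpa [GWalk.edgesOf] using he
  have htw := (hout (H.tail e)).choose_spec
  set pt := (hout (H.tail e)).choose with hpt
  obtain ⟨w2, hw2F, hw2g⟩ : ∃ w : GWalk H (⟦H.tail e⟧ : Quotient s).out (H.head e),
      (∀ f ∈ w.edgesOf, f ∈ F) ∧ w.gainOf = (hout (H.head e)).choose.gainOf := by
    rw [hsame]
    exact ⟨_, (hout (H.head e)).choose_spec, rfl⟩
  have hc : (pt.append (GWalk.fwd e w2.reverse)).gainOf = 1 := by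
    refine h _ _ ?_
    intro f hf
    rw [GWalk.edgesOf_append, List.mem_append] at hf
    rcases hf with hf | hf
    · exact htw f hf
    · simp only [GWalk.edgesOf, List.mem_cons] at hf
      rcases hf with rfl | hf
      · exact he
      · exact hw2F f ((GWalk.edgesOf_reverse w2 f).1 hf)
  have hgc : (pt.append (GWalk.fwd e w2.reverse)).gainOf
      = pt.gainOf * (H.gain e * w2.gainOf⁻¹) := by
    simp [GWalk.gainOf_append, GWalk.gainOf, GWalk.gainOf_reverse]
  rw [hgc] at hc
  have hfin : pt.gainOf⁻¹ * (pt.gainOf * (H.gain e * w2.gainOf⁻¹)) * w2.gainOf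
      = pt.gainOf⁻¹ * 1 * w2.gainOf := by rw [hc]
  show H.gain e = pt.gainOf⁻¹ * (hout (H.head e)).choose.gainOf
  rw [← hw2g]
  simpa [mul_assoc] using hfin

end WalkAux


section Z2Aux

/-- The two-element group. -/
abbrev Gtwo : Type := Multiplicative (ZMod 2)

/-- The nontrivial element of `Gtwo`. -/
def ggen : Gtwo := Multiplicative.ofAdd 1

lemma card_Gtwo : Fintype.card Gtwo = 2 := by decide

lemma Gtwo_cases : ∀ x y : Gtwo, x = y ∨ x = ggen * y := by decide

lemma ggen_invol : ∀ x : Gtwo, ggen * (ggen * x) = x := by decide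

variable {W V E : Type} [Fintype W] [DecidableEq W] [Fintype V] [Fintype E]
  [DecidableEq V] [DecidableEq E]

/-- The lift of an edge of a gain graph to the covering graph. -/
def elift (H : GainGraph Gtwo V E) : Gtwo × E → Sym2 (Gtwo × V) :=
  fun q => s((q.1, H.tail q.2), (q.1 * H.gain q.2, H.head q.2))

/-- The lift of an edge, realised in `W` via the bijection `Φ`. -/
def wlift (H : GainGraph Gtwo V E) (Φ : (Gtwo × V) ≃ W) : Gtwo × E → Sym2 W :=
  fun q => Sym2.map Φ (elift H q)

lemma wlift_inj {H : GainGraph Gtwo V E} {Φ : (Gtwo × V) ≃ W}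
    (hinj : Function.Injective (elift H)) : Function.Injective (wlift H Φ) :=
  fun a b h => hinj (Sym2.map.injective Φ.injective h)

lemma mem_wlift {H : GainGraph Gtwo V E} {Φ : (Gtwo × V) ≃ W} {w : W} {q : Gtwo × E} :
    w ∈ wlift H Φ q ↔ w = Φ (q.1, H.tail q.2) ∨ w = Φ (q.1 * H.gain q.2, H.head q.2) := by
  simp [wlift, elift, Sym2.map_pair_eq, Sym2.mem_iff]

/-- The vertex support in `W` of a set of lifted edges. -/
def suppF (H : GainGraph Gtwo V E) (Φ : (Gtwo × V) ≃ W) (K : Finset (Gtwo × E)) : Finset W :=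
  K.image (fun q => Φ (q.1, H.tail q.2)) ∪ K.image (fun q => Φ (q.1 * H.gain q.2, H.head q.2))

lemma sym2Support_image (H : GainGraph Gtwo V E) (Φ : (Gtwo × V) ≃ W)
    (K : Finset (Gtwo × E)) :
    sym2Support (K.image (wlift H Φ)) = suppF H Φ K := by
  ext w
  simp only [sym2Support, suppF, Finset.mem_filter, Finset.mem_univ, true_and,
    Finset.mem_union, Finset.mem_image]
  constructor
  · rintro ⟨e', ⟨q, hq, rfl⟩, hw⟩
    rcases mem_wlift.1 hw with h | h
    · exact Or.inl ⟨q, hq, h.symm⟩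
    · exact Or.inr ⟨q, hq, h.symm⟩
  · rintro (⟨q, hq, h⟩ | ⟨q, hq, h⟩)
    · exact ⟨_, ⟨q, hq, rfl⟩, mem_wlift.2 (Or.inl h.symm)⟩
    · exact ⟨_, ⟨q, hq, rfl⟩, mem_wlift.2 (Or.inr h.symm)⟩

lemma suppF_union (H : GainGraph Gtwo V E) (Φ : (Gtwo × V) ≃ W)
    (K₁ K₂ : Finset (Gtwo × E)) :
    suppF H Φ (K₁ ∪ K₂) = suppF H Φ K₁ ∪ suppF H Φ K₂ := by
  ext w
  simp only [suppF, Finset.image_union, Finset.mem_union]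
  tauto

lemma suppF_mono (H : GainGraph Gtwo V E) (Φ : (Gtwo × V) ≃ W)
    {K₁ K₂ : Finset (Gtwo × E)} (h : K₁ ⊆ K₂) : suppF H Φ K₁ ⊆ suppF H Φ K₂ :=
  Finset.union_subset_union (Finset.image_subset_image h) (Finset.image_subset_image h)

lemma suppF_prod (H : GainGraph Gtwo V E) (Φ : (Gtwo × V) ≃ W) (F : Finset E) :
    suppF H Φ (Finset.univ ×ˢ F) = (Finset.univ ×ˢ H.vSpan F).image (fun z => Φ z) := by
  ext w
  constructor
  · intro hw
    rcases Finset.mem_union.1 hw with h | h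
    · obtain ⟨q, hq, rfl⟩ := Finset.mem_image.1 h
      refine Finset.mem_image.2 ⟨(q.1, H.tail q.2), ?_, rfl⟩
      refine Finset.mem_product.2 ⟨Finset.mem_univ _, ?_⟩
      exact Finset.mem_union.2 (Or.inl
        (Finset.mem_image.2 ⟨q.2, (Finset.mem_product.1 hq).2, rfl⟩))
    · obtain ⟨q, hq, rfl⟩ := Finset.mem_image.1 h
      refine Finset.mem_image.2 ⟨(q.1 * H.gain q.2, H.head q.2), ?_, rfl⟩
      refine Finset.mem_product.2 ⟨Finset.mem_univ _, ?_⟩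
      exact Finset.mem_union.2 (Or.inr
        (Finset.mem_image.2 ⟨q.2, (Finset.mem_product.1 hq).2, rfl⟩))
  · intro hw
    obtain ⟨z, hz, rfl⟩ := Finset.mem_image.1 hw
    rcases Finset.mem_union.1 (Finset.mem_product.1 hz).2 with h | h
    · obtain ⟨e, he, hte⟩ := Finset.mem_image.1 h
      refine Finset.mem_union.2 (Or.inl (Finset.mem_image.2 ⟨(z.1, e), ?_, ?_⟩))
      · exact Finset.mem_product.2 ⟨Finset.mem_univ _, he⟩
      · show Φ (z.1, H.tail e) = Φ z
        rw [hte]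
    · obtain ⟨e, he, hhe⟩ := Finset.mem_image.1 h
      refine Finset.mem_union.2 (Or.inr
        (Finset.mem_image.2 ⟨(z.1 * (H.gain e)⁻¹, e), ?_, ?_⟩))
      · exact Finset.mem_product.2 ⟨Finset.mem_univ _, he⟩
      · show Φ (z.1 * (H.gain e)⁻¹ * H.gain e, H.head e) = Φ z
        rw [inv_mul_cancel_right, hhe]

lemma card_suppF_prod (H : GainGraph Gtwo V E) (Φ : (Gtwo × V) ≃ W) (F : Finset E) :
    (suppF H Φ (Finset.univ ×ˢ F)).card = 2 * (H.vSpan F).card := by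
  rw [suppF_prod, Finset.card_image_of_injective _ Φ.injective, Finset.card_product,
    Finset.card_univ, card_Gtwo]

lemma card_prod_univ (F : Finset E) :
    ((Finset.univ : Finset Gtwo) ×ˢ F).card = 2 * F.card := by
  rw [Finset.card_product, Finset.card_univ, card_Gtwo]

/-- A `σ`-invariant set of lifted edges is a full product. -/
lemma inv_eq_prod {K : Finset (Gtwo × E)}
    (h : ∀ q ∈ K, (ggen * q.1, q.2) ∈ K) :
    K = Finset.univ ×ˢ (K.image Prod.snd) := by
  ext q
  constructor
  · intro hq
    exact Finset.mem_product.2 ⟨Finset.mem_univ _, Finset.mem_image.2 ⟨q, hq, rfl⟩⟩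
  · intro hq
    obtain ⟨q', hq', hsnd⟩ := Finset.mem_image.1 (Finset.mem_product.1 hq).2
    rcases Gtwo_cases q.1 q'.1 with h1 | h1
    · have : q = q' := Prod.ext h1 hsnd.symm
      exact this ▸ hq'
    · have : q = (ggen * q'.1, q'.2) := Prod.ext h1 hsnd.symm
      exact this ▸ h q' hq'

lemma suppF_image_sigma (H : GainGraph Gtwo V E) (Φ : (Gtwo × V) ≃ W)
    (K : Finset (Gtwo × E)) :
    suppF H Φ (K.image (fun q => (ggen * q.1, q.2)))
      = (suppF H Φ K).image (fun w => Φ (ggen * (Φ.symm w).1, (Φ.symm w).2)) := by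
  unfold suppF
  rw [Finset.image_union, Finset.image_image, Finset.image_image, Finset.image_image,
    Finset.image_image]
  congr 1
  · apply Finset.image_congr
    intro q _
    simp [Function.comp, Equiv.symm_apply_apply]
  · apply Finset.image_congr
    intro q _
    simp [Function.comp, Equiv.symm_apply_apply, mul_assoc]

lemma cover_mem (H : GainGraph Gtwo V E)
    (h1 : ∀ e : E, ¬(H.tail e = H.head e ∧ H.gain e = 1)) (z : Sym2 (Gtwo × V)) :
    z ∈ H.cover.edgeSet ↔ ∃ q, elift H q = z := by
  induction z using Sym2.ind with
  | _ a b =>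
    rw [SimpleGraph.mem_edgeSet]
    constructor
    · intro hab
      rw [GainGraph.cover, SimpleGraph.fromRel_adj] at hab
      obtain ⟨hne, h | h⟩ := hab
      · obtain ⟨e, h1', h2', h3'⟩ := h
        refine ⟨(a.1, e), ?_⟩
        show s((a.1, H.tail e), (a.1 * H.gain e, H.head e)) = s(a, b)
        have ha : (a.1, H.tail e) = a := by rw [← h1']
        have hb : (a.1 * H.gain e, H.head e) = b := by rw [← h2', ← h3']
        rw [ha, hb]
      · obtain ⟨e, h1', h2', h3'⟩ := h
        refine ⟨(b.1, e), ?_⟩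
        show s((b.1, H.tail e), (b.1 * H.gain e, H.head e)) = s(a, b)
        have hb : (b.1, H.tail e) = b := by rw [← h1']
        have ha : (b.1 * H.gain e, H.head e) = a := by rw [← h2', ← h3']
        rw [ha, hb, Sym2.eq_swap]
    · rintro ⟨q, hq⟩
      have hadj : H.cover.Adj (q.1, H.tail q.2) (q.1 * H.gain q.2, H.head q.2) := by
        rw [GainGraph.cover, SimpleGraph.fromRel_adj]
        refine ⟨?_, Or.inl ⟨q.2, rfl, rfl, rfl⟩⟩
        intro hcontra
        obtain ⟨h1c, h2c⟩ := Prod.ext_iff.1 hcontra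
        exact h1 q.2 ⟨h2c, left_eq_mul.1 h1c⟩
      rcases Sym2.eq_iff.1 hq with ⟨rfl, rfl⟩ | ⟨rfl, rfl⟩
      · exact hadj
      · exact hadj.symm

theorem gainTight_iff (H : GainGraph Gtwo V E) (G : SimpleGraph W) [DecidableRel G.Adj]
    (Φ : (Gtwo × V) ≃ W) (hinj : Function.Injective (elift H))
    (hedge : ∀ z : Sym2 W, z ∈ G.edgeSet ↔ ∃ q, wlift H Φ q = z) :
    TwoTwoTight G ↔ H.GainTight 2 2 1 := by
  classical
  have hW : Function.Injective (wlift H Φ) := wlift_inj hinj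
  have hEF : G.edgeFinset = Finset.univ.image (wlift H Φ) := by
    ext z
    simp only [SimpleGraph.mem_edgeFinset, hedge z, Finset.mem_image, Finset.mem_univ,
      true_and]
  have hcardE : G.edgeFinset.card = 2 * Fintype.card E := by
    rw [hEF, Finset.card_image_of_injective _ hW, Finset.card_univ, Fintype.card_prod,
      card_Gtwo]
  have hcardW : Fintype.card W = 2 * Fintype.card V := by
    rw [← Fintype.card_congr Φ, Fintype.card_prod, card_Gtwo]
  constructor
  · rintro ⟨hcount, hsparse⟩
    refine ⟨?_, ?_, ?_⟩
    · rw [hcardE, hcardW] at hcount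
      push_cast at hcount ⊢
      omega
    · -- balanced subsets
      intro F hFne hFbal
      obtain ⟨φv, hφv⟩ := hFbal.switchTrivial
      set F' : Finset (Sym2 W) := F.image (fun e => wlift H Φ (φv (H.tail e), e)) with hF'
      have hF'card : F'.card = F.card :=
        Finset.card_image_of_injective _ (fun a b h => congrArg Prod.snd (hW h))
      have hF'sub : F' ⊆ G.edgeFinset := by
        intro z hz
        obtain ⟨e, _, rfl⟩ := Finset.mem_image.1 hz
        rw [SimpleGraph.mem_edgeFinset, hedge]
        exact ⟨_, rfl⟩
      have hF'ne : F'.Nonempty := hFne.image _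
      have hsupp : sym2Support F' ⊆ (H.vSpan F).image (fun v => Φ (φv v, v)) := by
        intro w hw
        simp only [sym2Support, Finset.mem_filter, Finset.mem_univ, true_and] at hw
        obtain ⟨z, hz, hwz⟩ := hw
        obtain ⟨e, he, rfl⟩ := Finset.mem_image.1 hz
        have heF : e ∈ (↑F : Set E) := Finset.mem_coe.2 he
        rcases mem_wlift.1 hwz with h | h
        · exact Finset.mem_image.2 ⟨H.tail e,
            Finset.mem_union.2 (Or.inl (Finset.mem_image.2 ⟨e, he, rfl⟩)), h.symm⟩
        · refine Finset.mem_image.2 ⟨H.head e,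
            Finset.mem_union.2 (Or.inr (Finset.mem_image.2 ⟨e, he, rfl⟩)), ?_⟩
          rw [h, hφv e heF, mul_inv_cancel_left]
      have hb := hsparse F' hF'ne hF'sub
      have h1 : (sym2Support F').card ≤ (H.vSpan F).card :=
        le_trans (Finset.card_le_card hsupp) Finset.card_image_le
      rw [hF'card] at hb
      have h1' : ((sym2Support F').card : ℤ) ≤ ((H.vSpan F).card : ℤ) := by
        exact_mod_cast h1
      linarith
    · -- arbitrary subsets
      intro F hFne
      set F' : Finset (Sym2 W) := (Finset.univ ×ˢ F).image (wlift H Φ) with hF'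
      have hF'card : F'.card = 2 * F.card := by
        rw [hF', Finset.card_image_of_injective _ hW, card_prod_univ]
      have hF'sub : F' ⊆ G.edgeFinset := by
        intro z hz
        obtain ⟨q, _, rfl⟩ := Finset.mem_image.1 hz
        rw [SimpleGraph.mem_edgeFinset, hedge]
        exact ⟨_, rfl⟩
      have hF'ne : F'.Nonempty := (Finset.univ_nonempty.product hFne).image _
      have hb := hsparse F' hF'ne hF'sub
      rw [hF'card, hF', sym2Support_image, card_suppF_prod] at hb
      push_cast at hb ⊢
      omega
  · rintro ⟨hcount, hbal, hgen⟩
    refine ⟨?_, ?_⟩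
    · rw [hcardE, hcardW]
      push_cast at hcount ⊢
      omega
    · intro F' hne hsub
      set K : Finset (Gtwo × E) := Finset.univ.filter (fun q => wlift H Φ q ∈ F') with hK
      have hF'K : F' = K.image (wlift H Φ) := by
        ext z
        constructor
        · intro hz
          have hzE := hsub hz
          rw [SimpleGraph.mem_edgeFinset, hedge] at hzE
          obtain ⟨q, rfl⟩ := hzE
          exact Finset.mem_image.2 ⟨q, Finset.mem_filter.2 ⟨Finset.mem_univ _, hz⟩, rfl⟩
        · intro hz
          obtain ⟨q, hq, rfl⟩ := Finset.mem_image.1 hz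
          exact (Finset.mem_filter.1 hq).2
      have hKcard : K.card = F'.card := by
        rw [hF'K, Finset.card_image_of_injective _ hW]
      have hKne : K.Nonempty := by
        obtain ⟨z, hz⟩ := hne
        rw [hF'K] at hz
        obtain ⟨q, hq, _⟩ := Finset.mem_image.1 hz
        exact ⟨q, hq⟩
      set σ : Gtwo × E → Gtwo × E := fun q => (ggen * q.1, q.2) with hσ
      have hσinj : Function.Injective σ := by
        intro a b h
        obtain ⟨h1, h2⟩ := Prod.ext_iff.1 h
        exact Prod.ext (mul_left_cancel h1) h2
      set A : Finset W := sym2Support F' with hA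
      have hAK : A = suppF H Φ K := by rw [hA, hF'K, sym2Support_image]
      by_cases hI : (K ∩ K.image σ).Nonempty
      · -- intersection nonempty
        set U : Finset (Gtwo × E) := K ∪ K.image σ with hU
        set I : Finset (Gtwo × E) := K ∩ K.image σ with hIdef
        have hUinv : ∀ q ∈ U, (ggen * q.1, q.2) ∈ U := by
          intro q hq
          rcases Finset.mem_union.1 hq with h | h
          · exact Finset.mem_union.2 (Or.inr (Finset.mem_image.2 ⟨q, h, rfl⟩))
          · obtain ⟨q', hq', rfl⟩ := Finset.mem_image.1 h
            refine Finset.mem_union.2 (Or.inl ?_)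
            have : (ggen * (σ q').1, (σ q').2) = q' := Prod.ext (ggen_invol _) rfl
            rwa [this]
        have hIinv : ∀ q ∈ I, (ggen * q.1, q.2) ∈ I := by
          intro q hq
          obtain ⟨h1, h2⟩ := Finset.mem_inter.1 hq
          obtain ⟨q', hq', rfl⟩ := Finset.mem_image.1 h2
          have heq : (ggen * (σ q').1, (σ q').2) = q' := Prod.ext (ggen_invol _) rfl
          exact Finset.mem_inter.2 ⟨by rw [heq]; exact hq',
            Finset.mem_image.2 ⟨σ q', h1, rfl⟩⟩
        set FU : Finset E := U.image Prod.snd with hFU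
        set FI : Finset E := I.image Prod.snd with hFI
        have hUprod : U = Finset.univ ×ˢ FU := inv_eq_prod hUinv
        have hIprod : I = Finset.univ ×ˢ FI := inv_eq_prod hIinv
        have hUcard : U.card = 2 * FU.card := by rw [hUprod, card_prod_univ]
        have hIcard : I.card = 2 * FI.card := by rw [hIprod, card_prod_univ]
        have hFUne : FU.Nonempty := (hKne.mono Finset.subset_union_left).image _
        have hFIne : FI.Nonempty := hI.image _
        have hgU := hgen FU hFUne
        have hgI := hgen FI hFIne
        -- support counts
        have hsU : (suppF H Φ U).card = 2 * (H.vSpan FU).card := by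
          rw [hUprod, card_suppF_prod]
        have hsI : (suppF H Φ I).card = 2 * (H.vSpan FI).card := by
          rw [hIprod, card_suppF_prod]
        set σW : W → W := fun w => Φ (ggen * (Φ.symm w).1, (Φ.symm w).2) with hσW
        have hσWinj : Function.Injective σW := by
          intro a b h
          have h2 := Φ.injective h
          obtain ⟨h3, h4⟩ := Prod.ext_iff.1 h2
          have h5 : (Φ.symm a : Gtwo × V) = Φ.symm b := Prod.ext (mul_left_cancel h3) h4
          exact Φ.symm.injective h5
        have himg : suppF H Φ (K.image σ) = A.image σW := by
          rw [hAK, hσ, hσW, suppF_image_sigma]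
        have hsuppU : suppF H Φ U = A ∪ A.image σW := by
          rw [hU, suppF_union, himg, hAK]
        have hsuppIsub : suppF H Φ I ⊆ A ∩ A.image σW := by
          refine Finset.subset_inter ?_ ?_
          · rw [hAK]; exact suppF_mono H Φ Finset.inter_subset_left
          · rw [← himg]; exact suppF_mono H Φ Finset.inter_subset_right
        have hcardsum : (A ∪ A.image σW).card + (A ∩ A.image σW).card = 2 * A.card := by
          rw [Finset.card_union_add_card_inter, Finset.card_image_of_injective _ hσWinj]
          omega
        have hKUI : U.card + I.card = 2 * K.card := by
          rw [hU, hIdef, Finset.card_union_add_card_inter,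
            Finset.card_image_of_injective _ hσinj]
          omega
        have c1 : (suppF H Φ U).card = (A ∪ A.image σW).card := by rw [hsuppU]
        have c2 : (suppF H Φ I).card ≤ (A ∩ A.image σW).card :=
          Finset.card_le_card hsuppIsub
        push_cast at hgU hgI ⊢
        have c1' : ((suppF H Φ U).card : ℤ) = ((A ∪ A.image σW).card : ℤ) := by
          exact_mod_cast c1
        have c2' : ((suppF H Φ I).card : ℤ) ≤ ((A ∩ A.image σW).card : ℤ) := by
          exact_mod_cast c2
        have hsU' : ((suppF H Φ U).card : ℤ) = 2 * ((H.vSpan FU).card : ℤ) := by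
          exact_mod_cast hsU
        have hsI' : ((suppF H Φ I).card : ℤ) = 2 * ((H.vSpan FI).card : ℤ) := by
          exact_mod_cast hsI
        have hUcard' : (U.card : ℤ) = 2 * (FU.card : ℤ) := by exact_mod_cast hUcard
        have hIcard' : (I.card : ℤ) = 2 * (FI.card : ℤ) := by exact_mod_cast hIcard
        have hKUI' : (U.card : ℤ) + (I.card : ℤ) = 2 * (K.card : ℤ) := by
          exact_mod_cast hKUI
        have hcardsum' : ((A ∪ A.image σW).card : ℤ) + ((A ∩ A.image σW).card : ℤ)
            = 2 * (A.card : ℤ) := by exact_mod_cast hcardsum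
        have hKcard' : (K.card : ℤ) = (F'.card : ℤ) := by exact_mod_cast hKcard
        linarith
      · -- intersection empty: at most one lift of each edge
        have hsndinj : Set.InjOn Prod.snd (K : Set (Gtwo × E)) := by
          intro q hq q' hq' hsnd
          by_contra hne'
          rcases Gtwo_cases q.1 q'.1 with h1 | h1
          · exact hne' (Prod.ext h1 hsnd)
          · have hqσ : q = σ q' := Prod.ext h1 hsnd
            have : q ∈ K ∩ K.image σ :=
              Finset.mem_inter.2 ⟨hq, Finset.mem_image.2 ⟨q', hq', hqσ.symm⟩⟩
            exact hI ⟨q, this⟩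
        set F0 : Finset E := K.image Prod.snd with hF0
        have hF0card : F0.card = K.card := Finset.card_image_of_injOn hsndinj
        have hF0ne : F0.Nonempty := hKne.image _
        set B : Finset V := A.image (fun w => (Φ.symm w).2) with hB
        have hBva : B = H.vSpan F0 := by
          rw [hB, hAK]
          unfold suppF GainGraph.vSpan
          rw [Finset.image_union, Finset.image_image, Finset.image_image,
            hF0, Finset.image_image, Finset.image_image]
          congr 1
          · apply Finset.image_congr
            intro q _
            simp [Function.comp, Equiv.symm_apply_apply]
          · apply Finset.image_congr
            intro q _
            simp [Function.comp, Equiv.symm_apply_apply]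
        have hBA : B.card ≤ A.card := Finset.card_image_le
        have hmemA : ∀ q ∈ K, Φ (q.1, H.tail q.2) ∈ A ∧
            Φ (q.1 * H.gain q.2, H.head q.2) ∈ A := by
          intro q hq
          rw [hAK]
          exact ⟨Finset.mem_union.2 (Or.inl (Finset.mem_image.2 ⟨q, hq, rfl⟩)),
            Finset.mem_union.2 (Or.inr (Finset.mem_image.2 ⟨q, hq, rfl⟩))⟩
        by_cases hinjA : B.card = A.card
        · have hinjOn : Set.InjOn (fun w => (Φ.symm w).2) (A : Set W) :=
            Finset.card_image_iff.1 (by rw [← hB, hinjA])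
          set φv : V → Gtwo := fun v =>
            if h : ∃ w, w ∈ A ∧ ((Φ.symm w).2 : V) = v then (Φ.symm h.choose).1 else 1
            with hφvdef
          have hφv : ∀ w ∈ A, φv ((Φ.symm w).2) = (Φ.symm w).1 := by
            intro w hw
            have hex : ∃ w', w' ∈ A ∧ ((Φ.symm w').2 : V) = (Φ.symm w).2 := ⟨w, hw, rfl⟩
            rw [hφvdef]
            simp only [dif_pos hex]
            have hspec := hex.choose_spec
            have heqw : hex.choose = w := hinjOn hspec.1 hw hspec.2
            rw [heqw]
          have hswitch : H.SwitchTrivial (↑F0 : Set E) := by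
            refine ⟨φv, fun e he => ?_⟩
            obtain ⟨q, hq, hq2⟩ := Finset.mem_image.1 (Finset.mem_coe.1 he)
            obtain ⟨hta, hha⟩ := hmemA q hq
            have h1 : φv (H.tail q.2) = q.1 := by
              have := hφv _ hta
              simpa [Equiv.symm_apply_apply] using this
            have h2 : φv (H.head q.2) = q.1 * H.gain q.2 := by
              have := hφv _ hha
              simpa [Equiv.symm_apply_apply] using this
            rw [← hq2, h1, h2, inv_mul_cancel_left]
          have hb0 := hbal F0 hF0ne hswitch.balanced
          rw [← hBva, hinjA, hF0card, hKcard] at hb0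
          exact hb0
        · have hBlt : B.card + 1 ≤ A.card := Nat.lt_iff_add_one_le.1
            (lt_of_le_of_ne hBA hinjA)
          have hg0 := hgen F0 hF0ne
          rw [← hBva, hF0card] at hg0
          push_cast at hg0 ⊢
          have hBlt' : (B.card : ℤ) + 1 ≤ (A.card : ℤ) := by exact_mod_cast hBlt
          have hKcard' : (K.card : ℤ) = (F'.card : ℤ) := by exact_mod_cast hKcard
          linarith

end Z2Aux


/-- Proposition `prop:22tight`: for the group `ℤ₂` acting freely on the
vertices and edges of a simple graph `G`, `G` is `(2,2)`-tight if and only if its quotient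
gain graph is `(2,2,1)`-gain-tight. -/
theorem statement8
    {W V E : Type} [Fintype W] [DecidableEq W] [Fintype V] [Fintype E]
    [DecidableEq V] [DecidableEq E]
    (G : SimpleGraph W) [DecidableRel G.Adj]
    (θ : Multiplicative (ZMod 2) →* Equiv.Perm W)
    (hfreeV : FreeGraphAction G θ)
    (hfreeE : ∀ x : Multiplicative (ZMod 2), x ≠ 1 → ∀ e ∈ G.edgeSet, Sym2.map (θ x) e ≠ e)
    (H : GainGraph (Multiplicative (ZMod 2)) V E) (hquot : IsQuotientOf G θ H) :
    TwoTwoTight G ↔ H.GainTight 2 2 1 := by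
  classical
  obtain ⟨⟨hs1, hs2⟩, φiso, hequiv⟩ := hquot
  refine gainTight_iff H G φiso.toEquiv (fun a b h => hs2 h) ?_
  have hmap : ∀ y : Sym2 (Gtwo × V),
      Sym2.map φiso.toEquiv y ∈ G.edgeSet ↔ y ∈ H.cover.edgeSet := by
    refine Sym2.ind fun a b => ?_
    rw [Sym2.map_pair_eq, SimpleGraph.mem_edgeSet, SimpleGraph.mem_edgeSet]
    exact φiso.map_adj_iff
  intro z
  have hzz : Sym2.map (φiso.toEquiv) (Sym2.map φiso.toEquiv.symm z) = z := by
    rw [Sym2.map_map]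
    have hid : (⇑φiso.toEquiv ∘ ⇑φiso.toEquiv.symm) = id := Equiv.self_comp_symm _
    rw [hid, Sym2.map_id]
    rfl
  constructor
  · intro hz
    rw [← hzz, hmap, cover_mem H hs1] at hz
    obtain ⟨q, hq⟩ := hz
    refine ⟨q, ?_⟩
    show Sym2.map φiso.toEquiv (elift H q) = z
    rw [hq, hzz]
  · rintro ⟨q, rfl⟩
    show Sym2.map φiso.toEquiv (elift H q) ∈ G.edgeSet
    rw [hmap, cover_mem H hs1]
    exact ⟨q, rfl⟩

end SymSurf
end
end

section
/- Let S be a group, G a simple graph on which S acts freely, and (G_0,ψ) its quotient S-gain graph. Then (G_0,ψ) is (2,3,3)-gain-tight if and only if (G_0,ψ) can be constructed sequentially from K_2 (a single edge) by H1a and H2a operations. -/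
open Matrix Real

noncomputable section

namespace SymSurf


variable {Γ V E : Type*} [Group Γ]

/-! ### Auxiliary infrastructure for statement 9 -/

section HenPrf

variable {Γ : Type*} [Group Γ]

lemma GainGraph.EdgeIs.flip {V E : Type*} {H : GainGraph Γ V E} {e : E} {u w : V} {g : Γ}
    (h : H.EdgeIs e u w g) : H.EdgeIs e w u g⁻¹ := by
  rcases h with ⟨h1, h2, h3⟩ | ⟨h1, h2, h3⟩
  · exact Or.inr ⟨h1, h2, by rw [h3, inv_inv]⟩
  · exact Or.inl ⟨h1, h2, h3⟩

lemma GGIso.refl {Γ : Type} [Group Γ] {V E : Type*} (H : GainGraph Γ V E) : GGIso H H :=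
  ⟨Equiv.refl V, Equiv.refl E, fun _ => Or.inl ⟨rfl, rfl, rfl⟩⟩

lemma GGIso.trans {Γ : Type} [Group Γ] {V E V' E' V'' E'' : Type*} {H : GainGraph Γ V E} {H' : GainGraph Γ V' E'}
    {H'' : GainGraph Γ V'' E''} (h1 : GGIso H H') (h2 : GGIso H' H'') : GGIso H H'' := by
  obtain ⟨fV, fE, hf⟩ := h1
  obtain ⟨gV, gE, hg⟩ := h2
  refine ⟨fV.trans gV, fE.trans gE, fun e => ?_⟩
  rcases hf e with ⟨h1, h2, h3⟩ | ⟨h1, h2, h3⟩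
  · have := hg (fE e); rw [h1, h2, h3] at this; simpa using this
  · have := (hg (fE e)).flip; rw [h1, h2, h3, inv_inv] at this; simpa using this

lemma GGIso.symm {Γ : Type} [Group Γ] {V E V' E' : Type*} {H : GainGraph Γ V E} {H' : GainGraph Γ V' E'}
    (h : GGIso H H') : GGIso H' H := by
  obtain ⟨fV, fE, hf⟩ := h
  refine ⟨fV.symm, fE.symm, fun e' => ?_⟩
  rcases hf (fE.symm e') with ⟨h1, h2, h3⟩ | ⟨h1, h2, h3⟩ <;>
    simp only [Equiv.apply_symm_apply] at h1 h2 h3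
  · rw [h1, h2, h3]
    simp only [Equiv.symm_apply_apply]
    exact Or.inl ⟨rfl, rfl, rfl⟩
  · rw [h1, h2, h3]
    simp only [Equiv.symm_apply_apply]
    exact Or.inr ⟨rfl, rfl, (inv_inv _).symm⟩

lemma mem_vSpan {V E : Type*} [DecidableEq V] {H : GainGraph Γ V E} {F : Finset E} {x : V} :
    x ∈ H.vSpan F ↔ ∃ e ∈ F, H.tail e = x ∨ H.head e = x := by
  simp only [GainGraph.vSpan, Finset.mem_union, Finset.mem_image]
  constructor
  · rintro (⟨e, he, rfl⟩ | ⟨e, he, rfl⟩)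
    exacts [⟨e, he, Or.inl rfl⟩, ⟨e, he, Or.inr rfl⟩]
  · rintro ⟨e, he, (rfl | rfl)⟩
    exacts [Or.inl ⟨e, he, rfl⟩, Or.inr ⟨e, he, rfl⟩]

lemma vSpan_mono {V E : Type*} [DecidableEq V] {H : GainGraph Γ V E} {F F' : Finset E}
    (h : F ⊆ F') : H.vSpan F ⊆ H.vSpan F' := by
  intro x hx
  rw [mem_vSpan] at hx ⊢
  obtain ⟨e, he, hx⟩ := hx
  exact ⟨e, h he, hx⟩

lemma vSpan_union {V E : Type*} [DecidableEq V] [DecidableEq E] (H : GainGraph Γ V E) (A B : Finset E) :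
    H.vSpan (A ∪ B) = H.vSpan A ∪ H.vSpan B := by
  ext x
  simp only [mem_vSpan, Finset.mem_union]
  constructor
  · rintro ⟨e, (he | he), hx⟩
    exacts [Or.inl ⟨e, he, hx⟩, Or.inr ⟨e, he, hx⟩]
  · rintro (⟨e, he, hx⟩ | ⟨e, he, hx⟩)
    exacts [⟨e, Or.inl he, hx⟩, ⟨e, Or.inr he, hx⟩]

/-- The `(2,3)`-sparsity condition (the essential part of `GainTight 2 3 3`). -/
def Sparse {V E : Type*} [Fintype V] [Fintype E] [DecidableEq V]
    (H : GainGraph Γ V E) : Prop :=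
  ∀ F : Finset E, F.Nonempty → (F.card : ℤ) ≤ 2 * ((H.vSpan F).card : ℤ) - 3

lemma gainTight_iff_s9 {V E : Type*} [Fintype V] [Fintype E] [DecidableEq V]
    (H : GainGraph Γ V E) :
    H.GainTight 2 3 3 ↔
      ((Fintype.card E : ℤ) = 2 * (Fintype.card V : ℤ) - 3 ∧ Sparse H) := by
  constructor
  · rintro ⟨h1, _, h3⟩; exact ⟨h1, h3⟩
  · rintro ⟨h1, h3⟩; exact ⟨h1, fun F hF _ => h3 F hF, h3⟩

lemma gainTight_congr {V E : Type*} {i1 i1' : Fintype V} {i2 i2' : Fintype E}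
    {i3 i3' : DecidableEq V} (H : GainGraph Γ V E)
    (h : @GainGraph.GainTight Γ V E _ H i1 i2 i3 2 3 3) :
    @GainGraph.GainTight Γ V E _ H i1' i2' i3' 2 3 3 := by
  cases Subsingleton.elim i1 i1'
  cases Subsingleton.elim i2 i2'
  cases Subsingleton.elim i3 i3'
  exact h


lemma vSpan_image_iso {V E V' E' : Type*} [DecidableEq V] [DecidableEq V']
    [DecidableEq E] [DecidableEq E']
    {H : GainGraph Γ V E} {H' : GainGraph Γ V' E'} (fV : V ≃ V') (fE : E ≃ E')
    (hf : ∀ e, H'.EdgeIs (fE e) (fV (H.tail e)) (fV (H.head e)) (H.gain e))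
    (F : Finset E) : H'.vSpan (F.image fE) = (H.vSpan F).image fV := by
  ext x
  simp only [mem_vSpan, Finset.mem_image]
  constructor
  · rintro ⟨e', ⟨e, he, rfl⟩, hx⟩
    rcases hf e with ⟨h1, h2, _⟩ | ⟨h1, h2, _⟩
    · rcases hx with rfl | rfl
      · exact ⟨H.tail e, ⟨e, he, Or.inl rfl⟩, h1.symm⟩
      · exact ⟨H.head e, ⟨e, he, Or.inr rfl⟩, h2.symm⟩
    · rcases hx with rfl | rfl
      · exact ⟨H.head e, ⟨e, he, Or.inr rfl⟩, h1.symm⟩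
      · exact ⟨H.tail e, ⟨e, he, Or.inl rfl⟩, h2.symm⟩
  · rintro ⟨a, ⟨e, he, ha⟩, rfl⟩
    refine ⟨fE e, ⟨e, he, rfl⟩, ?_⟩
    rcases hf e with ⟨h1, h2, _⟩ | ⟨h1, h2, _⟩ <;> rcases ha with rfl | rfl
    · exact Or.inl h1
    · exact Or.inr h2
    · exact Or.inr h2
    · exact Or.inl h1

lemma gainTight_of_iso {Γ : Type} [Group Γ] {V E V' E' : Type*}
    [Fintype V] [Fintype E] [DecidableEq V] [Fintype V'] [Fintype E'] [DecidableEq V']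
    {H : GainGraph Γ V E} {H' : GainGraph Γ V' E'} (h : GGIso H H')
    (ht : H.GainTight 2 3 3) : H'.GainTight 2 3 3 := by
  classical
  obtain ⟨fV, fE, hf⟩ := h
  rw [gainTight_iff_s9] at ht ⊢
  obtain ⟨hcard, hsp⟩ := ht
  constructor
  · rw [← Fintype.card_congr fV, ← Fintype.card_congr fE]; exact hcard
  · intro F' hF'
    set F : Finset E := F'.image fE.symm with hFdef
    have hF'eq : F' = F.image fE := by
      ext e; simp [hFdef]
    have hFne : F.Nonempty := hF'.image _
    have hcards : F'.card = F.card := by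
      rw [hF'eq, Finset.card_image_of_injective _ fE.injective]
    have hspan : (H'.vSpan F').card = (H.vSpan F).card := by
      rw [hF'eq, vSpan_image_iso fV fE hf F,
        Finset.card_image_of_injective _ fV.injective]
    rw [hcards, hspan]
    exact hsp F hFne

lemma constructed_of_iso {Γ : Type} [Group Γ] {X Y : BGG Γ}
    (hX : Constructed (fun X => ∃ g : Γ, GGIso (K2gg g) X.gg)
      (fun X Y => StepH1a X Y ∨ StepH2a X Y) (fun _ _ _ => False) X)
    (h : GGIso X.gg Y.gg) :
    Constructed (fun X => ∃ g : Γ, GGIso (K2gg g) X.gg)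
      (fun X Y => StepH1a X Y ∨ StepH2a X Y) (fun _ _ _ => False) Y := by
  cases hX with
  | base_mem hb =>
      obtain ⟨g, hg⟩ := hb
      exact Constructed.base_mem ⟨g, hg.trans h⟩
  | step_mem hX' hs =>
      refine Constructed.step_mem hX' ?_
      rcases hs with ⟨H', h1, h2⟩ | ⟨e₀, z, H', h1, h2⟩
      · exact Or.inl ⟨H', h1, h2.trans h⟩
      · exact Or.inr ⟨e₀, z, H', h1, h2.trans h⟩
  | join_mem _ _ hj => exact hj.elim

lemma k2_tight {Γ : Type} [Group Γ] (g : Γ) : (K2gg g).GainTight 2 3 3 := by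
  rw [gainTight_iff_s9]
  constructor
  · simp
  · intro F hF
    obtain ⟨e, he⟩ := hF
    have h0 : (0 : Fin 2) ∈ (K2gg g).vSpan F := mem_vSpan.2 ⟨e, he, Or.inl rfl⟩
    have h1 : (1 : Fin 2) ∈ (K2gg g).vSpan F := mem_vSpan.2 ⟨e, he, Or.inr rfl⟩
    have hcard : 1 < ((K2gg g).vSpan F).card :=
      Finset.one_lt_card.2 ⟨0, h0, 1, h1, by decide⟩
    have hcard' : F.card ≤ 1 := le_trans (Finset.card_le_univ F) (by simp)
    have := hcard
    omega


lemma gainTight_h1a {Γ : Type} [Group Γ] {V E : Type*} [Fintype V] [Fintype E]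
    [DecidableEq V] [DecidableEq E]
    {H : GainGraph Γ V E} {H' : GainGraph Γ (Option V) (E ⊕ Fin 2)}
    (hmove : IsH1a H H') (ht : H.GainTight 2 3 3) : H'.GainTight 2 3 3 := by
  classical
  obtain ⟨hcopy, hheads, a, b, hab, hta, htb⟩ := hmove
  rw [gainTight_iff_s9] at ht ⊢
  obtain ⟨hcount, hsp⟩ := ht
  constructor
  · simp only [Fintype.card_sum, Fintype.card_option, Fintype.card_fin]
    push_cast
    push_cast at hcount
    linarith
  · intro F' hF'
    set FL := F'.toLeft with hFL
    set FR := F'.toRight with hFR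
    have hcards : FL.card + FR.card = F'.card := Finset.card_toLeft_add_card_toRight (u := F')
    have hsubL : ∀ x ∈ H.vSpan FL, some x ∈ H'.vSpan F' := by
      intro x hx
      rw [mem_vSpan] at hx ⊢
      obtain ⟨e, he, hx⟩ := hx
      refine ⟨Sum.inl e, Finset.mem_toLeft.1 he, ?_⟩
      rcases hx with rfl | rfl
      · exact Or.inl (hcopy e).1
      · exact Or.inr (hcopy e).2.1
    have himg : (H.vSpan FL).image some ⊆ H'.vSpan F' := by
      intro x hx
      obtain ⟨y, hy, rfl⟩ := Finset.mem_image.1 hx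
      exact hsubL y hy
    have hspanL : (H.vSpan FL).card ≤ (H'.vSpan F').card := by
      calc (H.vSpan FL).card = ((H.vSpan FL).image some).card :=
            (Finset.card_image_of_injective _ (Option.some_injective V)).symm
        _ ≤ _ := Finset.card_le_card himg
    by_cases hFRne : FR.Nonempty
    · obtain ⟨i, hi⟩ := hFRne
      have hiF : Sum.inr i ∈ F' := Finset.mem_toRight.1 hi
      have hnone : (none : Option V) ∈ H'.vSpan F' :=
        mem_vSpan.2 ⟨Sum.inr i, hiF, Or.inr (hheads i)⟩
      have hins : insert (none : Option V) ((H.vSpan FL).image some) ⊆ H'.vSpan F' :=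
        Finset.insert_subset hnone himg
      have hspan1 : (H.vSpan FL).card + 1 ≤ (H'.vSpan F').card := by
        have h1 : (insert (none : Option V) ((H.vSpan FL).image some)).card
            = (H.vSpan FL).card + 1 := by
          rw [Finset.card_insert_of_notMem (by simp),
            Finset.card_image_of_injective _ (Option.some_injective V)]
        calc (H.vSpan FL).card + 1 = _ := h1.symm
          _ ≤ _ := Finset.card_le_card hins
      have hFRcard : FR.card ≤ 2 := le_trans (Finset.card_le_univ FR) (by simp)
      by_cases hFLne : FL.Nonempty
      · have h1 := hsp FL hFLne
        omega
      · have hFL0 : FL.card = 0 := by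
          simp [Finset.not_nonempty_iff_eq_empty.1 hFLne]
        by_cases h01 : (0 : Fin 2) ∈ FR ∧ (1 : Fin 2) ∈ FR
        · have hsub : ({none, some a, some b} : Finset (Option V)) ⊆ H'.vSpan F' := by
            intro x hx
            simp only [Finset.mem_insert, Finset.mem_singleton] at hx
            rcases hx with rfl | rfl | rfl
            · exact hnone
            · exact mem_vSpan.2 ⟨Sum.inr 0, Finset.mem_toRight.1 h01.1, Or.inl hta⟩
            · exact mem_vSpan.2 ⟨Sum.inr 1, Finset.mem_toRight.1 h01.2, Or.inl htb⟩
          have hc3 : ({none, some a, some b} : Finset (Option V)).card = 3 := by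
            rw [Finset.card_insert_of_notMem (by simp),
              Finset.card_insert_of_notMem (by simp [hab]), Finset.card_singleton]
          have h3 := Finset.card_le_card hsub
          rw [hc3] at h3
          omega
        · have hFR1 : FR.card = 1 := by
            rcases Nat.lt_or_ge FR.card 2 with h | h
            · have : 0 < FR.card := Finset.card_pos.2 ⟨i, hi⟩
              omega
            · exfalso
              have huniv : FR = Finset.univ := Finset.eq_univ_of_card FR (by
                have := Finset.card_le_univ FR
                simp only [Finset.card_univ, Fintype.card_fin] at this ⊢
                omega)
              exact h01 ⟨huniv ▸ Finset.mem_univ _, huniv ▸ Finset.mem_univ _⟩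
          have htl : ∃ x : V, some x ∈ H'.vSpan F' := by
            refine ⟨if i = 0 then a else b, mem_vSpan.2 ⟨Sum.inr i, hiF, Or.inl ?_⟩⟩
            fin_cases i
            · simpa using hta
            · simpa using htb
          obtain ⟨x, hx⟩ := htl
          have h2 : 1 < (H'.vSpan F').card :=
            Finset.one_lt_card.2 ⟨none, hnone, some x, hx, by simp⟩
          omega
    · have hFR0 : FR.card = 0 := by
        simp [Finset.not_nonempty_iff_eq_empty.1 hFRne]
      have hFLne : FL.Nonempty := by
        rw [← Finset.card_pos]
        have := hF'.card_pos
        omega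
      have h1 := hsp FL hFLne
      omega

lemma gainTight_h2a {Γ : Type} [Group Γ] {V E : Type*} [Fintype V] [Fintype E]
    [DecidableEq V] [DecidableEq E]
    {H : GainGraph Γ V E} {e₀ : E} {z : V}
    {H' : GainGraph Γ (Option V) ({f : E // f ≠ e₀} ⊕ Fin 3)}
    (hmove : IsH2a H e₀ z H') (ht : H.GainTight 2 3 3) : H'.GainTight 2 3 3 := by
  classical
  obtain ⟨hloop, hz1, hz2, hcopy, hheads, ht0, ht1, hgain, ht2, -⟩ := hmove
  rw [gainTight_iff_s9] at ht ⊢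
  obtain ⟨hcount, hsp⟩ := ht
  have hsub : Fintype.card {f : E // f ≠ e₀} = Fintype.card E - 1 := by
    have h1 := Fintype.card_subtype_compl (fun f : E => f = e₀)
    have h2 : Fintype.card {f : E // f = e₀} = 1 := Fintype.card_subtype_eq e₀
    rw [h2] at h1
    exact h1
  have hEpos : 1 ≤ Fintype.card E := Fintype.card_pos_iff.2 ⟨e₀⟩
  constructor
  · simp only [Fintype.card_sum, Fintype.card_option, Fintype.card_fin, hsub]
    push_cast at hcount ⊢
    omega
  · intro F' hF'
    set FL := F'.toLeft with hFL
    set FR := F'.toRight with hFR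
    have hcards : FL.card + FR.card = F'.card := Finset.card_toLeft_add_card_toRight (u := F')
    set FE : Finset E := FL.image Subtype.val with hFE
    have hFEcard : FE.card = FL.card :=
      Finset.card_image_of_injective _ Subtype.val_injective
    have hsubL : ∀ x ∈ H.vSpan FE, some x ∈ H'.vSpan F' := by
      intro x hx
      rw [mem_vSpan] at hx ⊢
      obtain ⟨e, he, hx⟩ := hx
      obtain ⟨f, hf, rfl⟩ := Finset.mem_image.1 he
      refine ⟨Sum.inl f, Finset.mem_toLeft.1 hf, ?_⟩
      rcases hx with rfl | rfl
      · exact Or.inl (hcopy f).1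
      · exact Or.inr (hcopy f).2.1
    have himg : (H.vSpan FE).image some ⊆ H'.vSpan F' := by
      intro x hx
      obtain ⟨y, hy, rfl⟩ := Finset.mem_image.1 hx
      exact hsubL y hy
    have hspanL : (H.vSpan FE).card ≤ (H'.vSpan F').card := by
      calc (H.vSpan FE).card = ((H.vSpan FE).image some).card :=
            (Finset.card_image_of_injective _ (Option.some_injective V)).symm
        _ ≤ _ := Finset.card_le_card himg
    have hFR3 : FR.card ≤ 3 := le_trans (Finset.card_le_univ FR) (by simp)
    by_cases hFRne : FR.Nonempty
    · obtain ⟨i, hi⟩ := hFRne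
      have hiF : Sum.inr i ∈ F' := Finset.mem_toRight.1 hi
      have hnone : (none : Option V) ∈ H'.vSpan F' :=
        mem_vSpan.2 ⟨Sum.inr i, hiF, Or.inr (hheads i)⟩
      by_cases h01 : (0 : Fin 3) ∈ FR ∧ (1 : Fin 3) ∈ FR
      · -- both subdivision edges present: contract back to e₀
        set G : Finset E := insert e₀ FE with hG
        have he₀FE : e₀ ∉ FE := by
          intro h
          obtain ⟨f, _, hfv⟩ := Finset.mem_image.1 h
          exact f.2 hfv
        have hGcard : G.card = FE.card + 1 := Finset.card_insert_of_notMem he₀FE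
        have hGne : G.Nonempty := ⟨e₀, Finset.mem_insert_self _ _⟩
        have hsubG : ∀ x ∈ H.vSpan G, some x ∈ H'.vSpan F' := by
          intro x hx
          rw [mem_vSpan] at hx
          obtain ⟨e, he, hx⟩ := hx
          rcases Finset.mem_insert.1 he with rfl | he'
          · rcases hx with rfl | rfl
            · exact mem_vSpan.2 ⟨Sum.inr 0, Finset.mem_toRight.1 h01.1, Or.inl ht0⟩
            · exact mem_vSpan.2 ⟨Sum.inr 1, Finset.mem_toRight.1 h01.2, Or.inl ht1⟩
          · exact hsubL x (mem_vSpan.2 ⟨e, he', hx⟩)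
        have himgG : insert (none : Option V) ((H.vSpan G).image some) ⊆ H'.vSpan F' := by
          refine Finset.insert_subset hnone ?_
          intro x hx
          obtain ⟨y, hy, rfl⟩ := Finset.mem_image.1 hx
          exact hsubG y hy
        have hspanG : (H.vSpan G).card + 1 ≤ (H'.vSpan F').card := by
          have h1 : (insert (none : Option V) ((H.vSpan G).image some)).card
              = (H.vSpan G).card + 1 := by
            rw [Finset.card_insert_of_notMem (by simp),
              Finset.card_image_of_injective _ (Option.some_injective V)]
          calc (H.vSpan G).card + 1 = _ := h1.symm
            _ ≤ _ := Finset.card_le_card himgG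
        have h1 := hsp G hGne
        omega
      · -- at most one subdivision edge; tails of present new edges are distinct
        have hFR2 : FR.card ≤ 2 := by
          rcases Nat.lt_or_ge FR.card 3 with h | h
          · omega
          · exfalso
            have huniv : FR = Finset.univ := Finset.eq_univ_of_card FR (by
              have := Finset.card_le_univ FR
              simp only [Finset.card_univ, Fintype.card_fin] at this ⊢
              omega)
            exact h01 ⟨huniv ▸ Finset.mem_univ _, huniv ▸ Finset.mem_univ _⟩
        by_cases hFLne : FL.Nonempty
        · have hFEne : FE.Nonempty := hFLne.image _
          have h1 := hsp FE hFEne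
          have hspan1 : (H.vSpan FE).card + 1 ≤ (H'.vSpan F').card := by
            have hins : insert (none : Option V) ((H.vSpan FE).image some) ⊆ H'.vSpan F' :=
              Finset.insert_subset hnone himg
            have h2 : (insert (none : Option V) ((H.vSpan FE).image some)).card
                = (H.vSpan FE).card + 1 := by
              rw [Finset.card_insert_of_notMem (by simp),
                Finset.card_image_of_injective _ (Option.some_injective V)]
            calc (H.vSpan FE).card + 1 = _ := h2.symm
              _ ≤ _ := Finset.card_le_card hins
          omega
        · have hFL0 : FL.card = 0 := by
            simp [Finset.not_nonempty_iff_eq_empty.1 hFLne]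
          -- the tails of the three new edges are pairwise distinct
          have huτ : ∀ i : Fin 3, H'.tail (Sum.inr i) = some (![H.tail e₀, H.head e₀, z] i) := by
            intro i
            fin_cases i
            · exact ht0
            · exact ht1
            · exact ht2
          have hτinj : Set.InjOn (fun i : Fin 3 => H'.tail (Sum.inr i)) ↑FR := by
            intro i _ j _ hij
            simp only [huτ i, huτ j, Option.some.injEq] at hij
            fin_cases i <;> fin_cases j <;>
              first
                | rfl
                | exact absurd hij hloop
                | exact absurd hij.symm hloop
                | exact absurd hij.symm hz1
                | exact absurd hij hz1
                | exact absurd hij.symm hz2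
                | exact absurd hij hz2
          have himgτ : insert (none : Option V)
              (FR.image (fun i => H'.tail (Sum.inr i))) ⊆ H'.vSpan F' := by
            refine Finset.insert_subset hnone ?_
            intro x hx
            obtain ⟨j, hj, rfl⟩ := Finset.mem_image.1 hx
            exact mem_vSpan.2 ⟨Sum.inr j, Finset.mem_toRight.1 hj, Or.inl rfl⟩
          have hnotnone : (none : Option V) ∉ FR.image (fun i => H'.tail (Sum.inr i)) := by
            intro h
            obtain ⟨j, _, hj⟩ := Finset.mem_image.1 h
            rw [huτ j] at hj
            exact Option.some_ne_none _ hj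
          have hcτ : (insert (none : Option V)
              (FR.image (fun i => H'.tail (Sum.inr i)))).card = FR.card + 1 := by
            rw [Finset.card_insert_of_notMem hnotnone, Finset.card_image_of_injOn hτinj]
          have hspanτ : FR.card + 1 ≤ (H'.vSpan F').card := by
            calc FR.card + 1 = _ := hcτ.symm
              _ ≤ _ := Finset.card_le_card himgτ
          have hFRpos : 0 < FR.card := Finset.card_pos.2 ⟨i, hi⟩
          omega
    · have hFR0 : FR.card = 0 := by
        simp [Finset.not_nonempty_iff_eq_empty.1 hFRne]
      have hFLne : FL.Nonempty := by
        rw [← Finset.card_pos]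
        have := hF'.card_pos
        omega
      have h1 := hsp FE (hFLne.image _)
      omega


lemma backward_constructed {Γ : Type} [Group Γ] {X : BGG Γ}
    (hX : Constructed (fun X => ∃ g : Γ, GGIso (K2gg g) X.gg)
      (fun X Y => StepH1a X Y ∨ StepH2a X Y) (fun _ _ _ => False) X) :
    ∀ (_ : Fintype X.V) (_ : Fintype X.E) (_ : DecidableEq X.V),
      X.gg.GainTight 2 3 3 := by
  induction hX with
  | base_mem hb =>
      intro i1 i2 i3
      obtain ⟨g, hg⟩ := hb
      exact gainTight_of_iso hg (k2_tight g)
  | @step_mem X Y hX' hs ih =>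
      intro i1 i2 i3
      rcases hs with ⟨H', hmove, hiso⟩ | ⟨e₀, z, H', hmove, hiso⟩
      · obtain ⟨fV, fE, -⟩ := id hiso
        haveI : Fintype X.V :=
          Fintype.ofInjective (fun v => fV (some v))
            (fV.injective.comp (Option.some_injective _))
        haveI : Fintype X.E :=
          Fintype.ofInjective (fun e => fE (Sum.inl e))
            (fE.injective.comp Sum.inl_injective)
        haveI : DecidableEq X.V := Classical.decEq _
        haveI : DecidableEq X.E := Classical.decEq _
        exact gainTight_of_iso hiso (gainTight_h1a hmove (ih _ _ _))
      · obtain ⟨fV, fE, -⟩ := id hiso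
        haveI : DecidableEq X.E := Classical.decEq _
        haveI : Fintype X.V :=
          Fintype.ofInjective (fun v => fV (some v))
            (fV.injective.comp (Option.some_injective _))
        have φinj : Function.Injective (fun f : X.E =>
            if h : f = e₀ then (Sum.inr 0 : {f : X.E // f ≠ e₀} ⊕ Fin 3)
            else Sum.inl ⟨f, h⟩) := by
          intro f g hfg
          by_cases hf : f = e₀ <;> by_cases hg : g = e₀ <;> simp_all
        haveI : Fintype X.E :=
          Fintype.ofInjective _ (fE.injective.comp φinj)
        haveI : DecidableEq X.V := Classical.decEq _
        exact gainTight_of_iso hiso (gainTight_h2a hmove (ih _ _ _))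
  | join_mem _ _ hj => exact hj.elim


section Fwd

variable {Γ : Type*} [Group Γ] {V E : Type*} [Fintype V] [Fintype E]
  [DecidableEq V] [DecidableEq E]

/-- Edges incident with `v`. -/
def incE (H : GainGraph Γ V E) (v : V) : Finset E :=
  Finset.univ.filter fun e => H.tail e = v ∨ H.head e = v

lemma mem_incE {H : GainGraph Γ V E} {v : V} {e : E} :
    e ∈ incE H v ↔ H.tail e = v ∨ H.head e = v := by
  simp [incE]

lemma sparse_no_loop {H : GainGraph Γ V E} (hsp : Sparse H) (e : E) :
    H.tail e ≠ H.head e := by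
  intro he
  have h1 := hsp {e} ⟨e, Finset.mem_singleton_self e⟩
  have h2 : H.vSpan {e} ⊆ {H.tail e} := by
    intro x hx
    rw [mem_vSpan] at hx
    obtain ⟨f, hf, hx⟩ := hx
    rw [Finset.mem_singleton] at hf
    subst hf
    rcases hx with rfl | rfl
    · exact Finset.mem_singleton_self _
    · rw [← he]; exact Finset.mem_singleton_self _
  have h3 := Finset.card_le_card h2
  simp only [Finset.card_singleton, Finset.card_singleton] at h3
  have h4 : ({e} : Finset E).card = 1 := Finset.card_singleton e
  omega

lemma sparse_no_parallel {H : GainGraph Γ V E} (hsp : Sparse H) {e f : E}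
    (hef : e ≠ f) {x y : V} (hsub : H.vSpan {e, f} ⊆ {x, y}) : False := by
  have h1 := hsp {e, f} ⟨e, by simp⟩
  have h2 := Finset.card_le_card hsub
  have h3 : ({e, f} : Finset E).card = 2 := Finset.card_pair hef
  have h4 : ({x, y} : Finset V).card ≤ 2 := Finset.card_insert_le _ _ |>.trans (by simp)
  omega

/-- The endpoint of an incident edge opposite to `v`. -/
def othV (H : GainGraph Γ V E) (v : V) (e : E) : V :=
  if H.tail e = v then H.head e else H.tail e

/-- The gain of an incident edge read from the opposite endpoint towards `v`. -/
def othG (H : GainGraph Γ V E) (v : V) (e : E) : Γ :=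
  if H.tail e = v then (H.gain e)⁻¹ else H.gain e

lemma edgeIs_oth {H : GainGraph Γ V E} {v : V} {e : E}
    (he : H.tail e = v ∨ H.head e = v) :
    H.EdgeIs e (othV H v e) v (othG H v e) := by
  by_cases h : H.tail e = v
  · refine Or.inr ⟨h, ?_, ?_⟩
    · simp [othV, h]
    · simp [othG, h]
  · have hh : H.head e = v := he.resolve_left h
    refine Or.inl ⟨?_, hh, ?_⟩
    · simp [othV, h]
    · simp [othG, h]

lemma othV_ne {H : GainGraph Γ V E} (hsp : Sparse H) {v : V} {e : E}
    (he : H.tail e = v ∨ H.head e = v) : othV H v e ≠ v := by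
  have hl := sparse_no_loop hsp e
  by_cases h : H.tail e = v
  · simp only [othV, h, if_true]
    rw [← h]; exact fun hc => hl hc.symm
  · have hh : H.head e = v := he.resolve_left h
    simp only [othV, h, if_false]
    rw [← hh]; exact hl

lemma ends_subset {H : GainGraph Γ V E} {v : V} {e : E}
    (he : H.tail e = v ∨ H.head e = v) {S : Finset V}
    (hv : v ∈ S) (ho : othV H v e ∈ S) {x : V}
    (hx : H.tail e = x ∨ H.head e = x) : x ∈ S := by
  by_cases h : H.tail e = v
  · rcases hx with rfl | rfl
    · rw [h]; exact hv
    · simpa [othV, h] using ho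
  · have hh : H.head e = v := he.resolve_left h
    rcases hx with rfl | rfl
    · simpa [othV, h] using ho
    · rw [hh]; exact hv

lemma othV_injOn {H : GainGraph Γ V E} (hsp : Sparse H) {v : V} {e f : E}
    (he : H.tail e = v ∨ H.head e = v) (hf : H.tail f = v ∨ H.head f = v)
    (hef : e ≠ f) : othV H v e ≠ othV H v f := by
  intro hoo
  refine sparse_no_parallel hsp hef (x := v) (y := othV H v e) ?_
  intro x hx
  rw [mem_vSpan] at hx
  obtain ⟨g, hg, hx⟩ := hx
  simp only [Finset.mem_insert, Finset.mem_singleton] at hg ⊢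
  rcases hg with rfl | rfl
  · by_cases h : H.tail g = v
    · rcases hx with rfl | rfl
      · exact Or.inl h
      · right; simp [othV, h]
    · have hh : H.head g = v := he.resolve_left h
      rcases hx with rfl | rfl
      · right; simp [othV, h]
      · exact Or.inl hh
  · by_cases h : H.tail g = v
    · rcases hx with rfl | rfl
      · exact Or.inl h
      · right; rw [hoo]; simp [othV, h]
    · have hh : H.head g = v := hf.resolve_left h
      rcases hx with rfl | rfl
      · right; rw [hoo]; simp [othV, h]
      · exact Or.inl hh

lemma sum_incE {H : GainGraph Γ V E} (hnl : ∀ e : E, H.tail e ≠ H.head e) :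
    ∑ v : V, (incE H v).card = 2 * Fintype.card E := by
  have h1 : (Finset.univ : Finset E).card
      = ∑ v : V, (Finset.univ.filter fun e => H.tail e = v).card :=
    Finset.card_eq_sum_card_fiberwise (fun e _ => Finset.mem_univ (H.tail e))
  have h2 : (Finset.univ : Finset E).card
      = ∑ v : V, (Finset.univ.filter fun e => H.head e = v).card :=
    Finset.card_eq_sum_card_fiberwise (fun e _ => Finset.mem_univ (H.head e))
  have h3 : ∀ v : V, (incE H v).card
      = (Finset.univ.filter fun e => H.tail e = v).card
        + (Finset.univ.filter fun e => H.head e = v).card := by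
    intro v
    rw [incE, Finset.filter_or]
    apply Finset.card_union_of_disjoint
    rw [Finset.disjoint_filter]
    intro e _ hte hhe
    exact hnl e (hte.trans hhe.symm)
  calc ∑ v : V, (incE H v).card
      = ∑ v : V, ((Finset.univ.filter fun e => H.tail e = v).card
        + (Finset.univ.filter fun e => H.head e = v).card) := by
        exact Finset.sum_congr rfl fun v _ => h3 v
    _ = 2 * Fintype.card E := by
        rw [Finset.sum_add_distrib, ← h1, ← h2, Finset.card_univ]
        ring

lemma exists_deg_le_three {H : GainGraph Γ V E}
    (hcount : (Fintype.card E : ℤ) = 2 * (Fintype.card V : ℤ) - 3)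
    (hsp : Sparse H) : ∃ v : V, (incE H v).card ≤ 3 := by
  by_contra hc
  push_neg at hc
  have h1 : ∀ v ∈ (Finset.univ : Finset V), 4 ≤ (incE H v).card := fun v _ => hc v
  have h2 : (Finset.univ : Finset V).card * 4 ≤ ∑ v : V, (incE H v).card :=
    Finset.card_nsmul_le_sum _ _ _ h1
  rw [sum_incE (sparse_no_loop hsp)] at h2
  rw [Finset.card_univ] at h2
  omega

lemma deg_ge_two {H : GainGraph Γ V E}
    (hcount : (Fintype.card E : ℤ) = 2 * (Fintype.card V : ℤ) - 3)
    (hsp : Sparse H) (hV : 3 ≤ Fintype.card V) (v : V) :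
    2 ≤ (incE H v).card := by
  by_contra hc
  push_neg at hc
  set F : Finset E := Finset.univ \ incE H v with hF
  have hFcard : F.card = Fintype.card E - (incE H v).card := by
    rw [hF, Finset.card_sdiff_of_subset (Finset.subset_univ _), Finset.card_univ]
  have hFne : F.Nonempty := by
    rw [← Finset.card_pos, hFcard]
    omega
  have hsub : H.vSpan F ⊆ Finset.univ.erase v := by
    intro x hx
    rw [mem_vSpan] at hx
    obtain ⟨e, he, hx⟩ := hx
    rw [hF, Finset.mem_sdiff] at he
    have hni : ¬(H.tail e = v ∨ H.head e = v) := fun h => he.2 (mem_incE.2 h)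
    push_neg at hni
    rw [Finset.mem_erase]
    refine ⟨?_, Finset.mem_univ x⟩
    rcases hx with rfl | rfl
    · exact hni.1
    · exact hni.2
  have h1 := hsp F hFne
  have h2 := Finset.card_le_card hsub
  rw [Finset.card_erase_of_mem (Finset.mem_univ v), Finset.card_univ] at h2
  omega

/-- The gain graph obtained by deleting the vertex `v` and all its incident edges. -/
def delV (H : GainGraph Γ V E) (v : V) :
    GainGraph Γ {w : V // w ≠ v} {e : E // H.tail e ≠ v ∧ H.head e ≠ v} :=
  ⟨fun e => ⟨H.tail e.1, e.2.1⟩, fun e => ⟨H.head e.1, e.2.2⟩, fun e => H.gain e.1⟩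

lemma delV_span {H : GainGraph Γ V E} {v : V}
    (F : Finset {e : E // H.tail e ≠ v ∧ H.head e ≠ v}) :
    ((delV H v).vSpan F).card = (H.vSpan (F.image Subtype.val)).card := by
  classical
  have himg : ((delV H v).vSpan F).image Subtype.val = H.vSpan (F.image Subtype.val) := by
    ext x
    simp only [Finset.mem_image, mem_vSpan]
    constructor
    · rintro ⟨y, ⟨e, he, hy⟩, rfl⟩
      refine ⟨e.1, ⟨e, he, rfl⟩, ?_⟩
      rcases hy with rfl | rfl
      · exact Or.inl rfl
      · exact Or.inr rfl
    · rintro ⟨e, ⟨f, hf, rfl⟩, hx⟩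
      rcases hx with rfl | rfl
      · exact ⟨(delV H v).tail f, ⟨f, hf, Or.inl rfl⟩, rfl⟩
      · exact ⟨(delV H v).head f, ⟨f, hf, Or.inr rfl⟩, rfl⟩
  calc ((delV H v).vSpan F).card = (((delV H v).vSpan F).image Subtype.val).card :=
        (Finset.card_image_of_injective _ Subtype.val_injective).symm
    _ = _ := by rw [himg]

lemma sparse_delV {H : GainGraph Γ V E} (hsp : Sparse H) (v : V) :
    Sparse (delV H v) := by
  intro F hF
  rw [delV_span]
  have h1 : (F.image Subtype.val).card = F.card :=
    Finset.card_image_of_injective _ Subtype.val_injective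
  have h2 := hsp (F.image Subtype.val) (hF.image _)
  omega

/-- `F` is a tight edge set. -/
def Tight (H : GainGraph Γ V E) (F : Finset E) : Prop :=
  (F.card : ℤ) = 2 * ((H.vSpan F).card : ℤ) - 3

lemma tight_union {H : GainGraph Γ V E} (hsp : Sparse H) {A B : Finset E}
    (hA : Tight H A) (hB : Tight H B) (hAne : A.Nonempty)
    (hint : 2 ≤ (H.vSpan A ∩ H.vSpan B).card ∨ (A ∩ B).Nonempty) :
    Tight H (A ∪ B) := by
  have hsE : (A ∪ B).card + (A ∩ B).card = A.card + B.card :=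
    Finset.card_union_add_card_inter A B
  have hsV : (H.vSpan (A ∪ B)).card + ((H.vSpan A) ∩ (H.vSpan B)).card
      = (H.vSpan A).card + (H.vSpan B).card := by
    rw [vSpan_union]
    exact Finset.card_union_add_card_inter _ _
  have hUne : (A ∪ B).Nonempty := hAne.mono Finset.subset_union_left
  have hU := hsp (A ∪ B) hUne
  have hc : 3 ≤ 2 * ((H.vSpan A ∩ H.vSpan B).card : ℤ) - ((A ∩ B).card : ℤ) := by
    by_cases hi : (A ∩ B).Nonempty
    · have h1 := hsp (A ∩ B) hi
      have h2 : H.vSpan (A ∩ B) ⊆ H.vSpan A ∩ H.vSpan B :=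
        Finset.subset_inter (vSpan_mono Finset.inter_subset_left)
          (vSpan_mono Finset.inter_subset_right)
      have h3 := Finset.card_le_card h2
      omega
    · have h0 : (A ∩ B).card = 0 := by
        rw [Finset.card_eq_zero, ← Finset.not_nonempty_iff_eq_empty]
        exact hi
      have h2 := hint.resolve_right hi
      omega
  unfold Tight at *
  omega

lemma tight_triple {H : GainGraph Γ V E} (hsp : Sparse H) {A B C : Finset E}
    {x y z : V}
    (hA : Tight H A) (hB : Tight H B) (hC : Tight H C)
    (hAne : A.Nonempty) (hBne : B.Nonempty) (hCne : C.Nonempty)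
    (hxA : x ∈ H.vSpan A) (hyA : y ∈ H.vSpan A)
    (hyB : y ∈ H.vSpan B) (hzB : z ∈ H.vSpan B)
    (hxC : x ∈ H.vSpan C) (hzC : z ∈ H.vSpan C)
    (hxy : x ≠ y) (hyz : y ≠ z) (hxz : x ≠ z) :
    Tight H (A ∪ B ∪ C) := by
  by_cases h1 : 2 ≤ (H.vSpan A ∩ H.vSpan B).card ∨ (A ∩ B).Nonempty
  · have hAB : Tight H (A ∪ B) := tight_union hsp hA hB hAne h1
    refine tight_union hsp hAB hC (hAne.mono Finset.subset_union_left) (Or.inl ?_)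
    refine Finset.one_lt_card.2 ⟨x, ?_, z, ?_, hxz⟩
    · exact Finset.mem_inter.2 ⟨by rw [vSpan_union]; exact Finset.mem_union_left _ hxA, hxC⟩
    · exact Finset.mem_inter.2 ⟨by rw [vSpan_union]; exact Finset.mem_union_right _ hzB, hzC⟩
  · by_cases h2 : 2 ≤ (H.vSpan A ∩ H.vSpan C).card ∨ (A ∩ C).Nonempty
    · have hAC : Tight H (A ∪ C) := tight_union hsp hA hC hAne h2
      have hT : Tight H ((A ∪ C) ∪ B) := by
        refine tight_union hsp hAC hB (hAne.mono Finset.subset_union_left) (Or.inl ?_)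
        refine Finset.one_lt_card.2 ⟨y, ?_, z, ?_, hyz⟩
        · exact Finset.mem_inter.2
            ⟨by rw [vSpan_union]; exact Finset.mem_union_left _ hyA, hyB⟩
        · exact Finset.mem_inter.2
            ⟨by rw [vSpan_union]; exact Finset.mem_union_right _ hzC, hzB⟩
      have : (A ∪ C) ∪ B = A ∪ B ∪ C := by
        ext w; simp only [Finset.mem_union]; tauto
      rwa [this] at hT
    · by_cases h3 : 2 ≤ (H.vSpan B ∩ H.vSpan C).card ∨ (B ∩ C).Nonempty
      · have hBC : Tight H (B ∪ C) := tight_union hsp hB hC hBne h3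
        have hT : Tight H ((B ∪ C) ∪ A) := by
          refine tight_union hsp hBC hA (hBne.mono Finset.subset_union_left) (Or.inl ?_)
          refine Finset.one_lt_card.2 ⟨x, ?_, y, ?_, hxy⟩
          · exact Finset.mem_inter.2
              ⟨by rw [vSpan_union]; exact Finset.mem_union_right _ hxC, hxA⟩
          · exact Finset.mem_inter.2
              ⟨by rw [vSpan_union]; exact Finset.mem_union_left _ hyB, hyA⟩
        have : (B ∪ C) ∪ A = A ∪ B ∪ C := by
          ext w; simp only [Finset.mem_union]; tauto
        rwa [this] at hT
      · -- all pairs edge-disjoint with small span intersections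
        push_neg at h1 h2 h3
        obtain ⟨h1s, h1e⟩ := h1
        obtain ⟨h2s, h2e⟩ := h2
        obtain ⟨h3s, h3e⟩ := h3
        have hABe : (A ∩ B).card = 0 := by
          rw [Finset.card_eq_zero]; exact h1e
        have hsE : (A ∪ B).card + (A ∩ B).card = A.card + B.card :=
          Finset.card_union_add_card_inter A B
        have hsV : (H.vSpan (A ∪ B)).card + ((H.vSpan A) ∩ (H.vSpan B)).card
            = (H.vSpan A).card + (H.vSpan B).card := by
          rw [vSpan_union]; exact Finset.card_union_add_card_inter _ _
        have hy1 : 1 ≤ ((H.vSpan A) ∩ (H.vSpan B)).card :=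
          Finset.card_pos.2 ⟨y, Finset.mem_inter.2 ⟨hyA, hyB⟩⟩
        -- second union
        have hUCe : ((A ∪ B) ∩ C).card = 0 := by
          rw [Finset.card_eq_zero, ← Finset.not_nonempty_iff_eq_empty]
          rintro ⟨w, hw⟩
          rw [Finset.mem_inter, Finset.mem_union] at hw
          rcases hw.1 with h | h
          · exact Finset.not_nonempty_iff_eq_empty.2 h2e ⟨w, Finset.mem_inter.2 ⟨h, hw.2⟩⟩
          · exact Finset.not_nonempty_iff_eq_empty.2 h3e ⟨w, Finset.mem_inter.2 ⟨h, hw.2⟩⟩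
        have hsE2 : (A ∪ B ∪ C).card + ((A ∪ B) ∩ C).card = (A ∪ B).card + C.card :=
          Finset.card_union_add_card_inter _ _
        have hsV2 : (H.vSpan (A ∪ B ∪ C)).card + ((H.vSpan (A ∪ B)) ∩ (H.vSpan C)).card
            = (H.vSpan (A ∪ B)).card + (H.vSpan C).card := by
          rw [vSpan_union (H := H) (A := A ∪ B) (B := C)]
          exact Finset.card_union_add_card_inter _ _
        have hxz2 : 2 ≤ ((H.vSpan (A ∪ B)) ∩ (H.vSpan C)).card := by
          refine Finset.one_lt_card.2 ⟨x, ?_, z, ?_, hxz⟩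
          · exact Finset.mem_inter.2
              ⟨by rw [vSpan_union]; exact Finset.mem_union_left _ hxA, hxC⟩
          · exact Finset.mem_inter.2
              ⟨by rw [vSpan_union]; exact Finset.mem_union_right _ hzB, hzC⟩
        have hU := hsp (A ∪ B ∪ C)
          ((hAne.mono Finset.subset_union_left).mono Finset.subset_union_left)
        unfold Tight at *
        omega


/-- `a, b` lie in a tight set avoiding `v`. -/
def Blocked (H : GainGraph Γ V E) (v a b : V) : Prop :=
  ∃ F : Finset E, (∀ e ∈ F, H.tail e ≠ v ∧ H.head e ≠ v) ∧ F.Nonempty ∧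
    a ∈ H.vSpan F ∧ b ∈ H.vSpan F ∧ Tight H F

lemma not_blocked_all {H : GainGraph Γ V E} (hsp : Sparse H) {v : V} {d1 d2 d3 : E}
    (hi1 : H.tail d1 = v ∨ H.head d1 = v) (hi2 : H.tail d2 = v ∨ H.head d2 = v)
    (hi3 : H.tail d3 = v ∨ H.head d3 = v)
    (h12 : d1 ≠ d2) (h13 : d1 ≠ d3) (h23 : d2 ≠ d3)
    (hb1 : Blocked H v (othV H v d1) (othV H v d2))
    (hb2 : Blocked H v (othV H v d2) (othV H v d3))
    (hb3 : Blocked H v (othV H v d1) (othV H v d3)) : False := by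
  obtain ⟨A, hAav, hAne, hxA, hyA, hAt⟩ := hb1
  obtain ⟨B, hBav, hBne, hyB, hzB, hBt⟩ := hb2
  obtain ⟨C, hCav, hCne, hxC, hzC, hCt⟩ := hb3
  have hxy := othV_injOn hsp hi1 hi2 h12
  have hyz := othV_injOn hsp hi2 hi3 h23
  have hxz := othV_injOn hsp hi1 hi3 h13
  have hT : Tight H (A ∪ B ∪ C) :=
    tight_triple hsp hAt hBt hCt hAne hBne hCne hxA hyA hyB hzB hxC hzC hxy hyz hxz
  set T := A ∪ B ∪ C with hTdef
  have hTav : ∀ e ∈ T, H.tail e ≠ v ∧ H.head e ≠ v := by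
    intro e he
    rcases Finset.mem_union.1 he with he | he
    · rcases Finset.mem_union.1 he with he | he
      · exact hAav e he
      · exact hBav e he
    · exact hCav e he
  have hvT : v ∉ H.vSpan T := by
    intro hv
    rw [mem_vSpan] at hv
    obtain ⟨e, he, h⟩ := hv
    rcases h with h | h
    · exact (hTav e he).1 h
    · exact (hTav e he).2 h
  have hAsub : A ⊆ T := Finset.subset_union_left.trans Finset.subset_union_left
  have hBsub : B ⊆ T := Finset.subset_union_right.trans Finset.subset_union_left
  have hCsub : C ⊆ T := Finset.subset_union_right
  have hxT : othV H v d1 ∈ H.vSpan T := vSpan_mono hAsub hxA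
  have hyT : othV H v d2 ∈ H.vSpan T := vSpan_mono hBsub hyB
  have hzT : othV H v d3 ∈ H.vSpan T := vSpan_mono hCsub hzC
  set D : Finset E := {d1, d2, d3} with hDdef
  have hDcard : D.card = 3 := by
    rw [hDdef, Finset.card_insert_of_notMem (by simp [h12, h13]), Finset.card_pair h23]
  have hdisj : Disjoint T D := by
    rw [Finset.disjoint_left]
    intro e heT heD
    have hinc : H.tail e = v ∨ H.head e = v := by
      rw [hDdef] at heD
      simp only [Finset.mem_insert, Finset.mem_singleton] at heD
      rcases heD with rfl | rfl | rfl
      exacts [hi1, hi2, hi3]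
    rcases hinc with h | h
    · exact (hTav e heT).1 h
    · exact (hTav e heT).2 h
  have hcardU : (T ∪ D).card = T.card + 3 := by
    rw [Finset.card_union_of_disjoint hdisj, hDcard]
  have hspanU : H.vSpan (T ∪ D) ⊆ insert v (H.vSpan T) := by
    rw [vSpan_union]
    intro w hw
    rcases Finset.mem_union.1 hw with hw | hw
    · exact Finset.mem_insert_of_mem hw
    · rw [mem_vSpan] at hw
      obtain ⟨e, he, hx⟩ := hw
      rw [hDdef] at he
      simp only [Finset.mem_insert, Finset.mem_singleton] at he
      rcases he with rfl | rfl | rfl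
      · exact ends_subset hi1 (Finset.mem_insert_self _ _) (Finset.mem_insert_of_mem hxT) hx
      · exact ends_subset hi2 (Finset.mem_insert_self _ _) (Finset.mem_insert_of_mem hyT) hx
      · exact ends_subset hi3 (Finset.mem_insert_self _ _) (Finset.mem_insert_of_mem hzT) hx
  have h1 := hsp (T ∪ D) ⟨d1, Finset.mem_union_right _ (by simp [hDdef])⟩
  have h2 := Finset.card_le_card hspanU
  have h3 : (insert v (H.vSpan T)).card = (H.vSpan T).card + 1 :=
    Finset.card_insert_of_notMem hvT
  unfold Tight at hT
  omega

lemma deg2_step {Γ : Type} [Group Γ] {V E : Type} [Fintype V] [Fintype E]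
    [DecidableEq V] [DecidableEq E]
    {H : GainGraph Γ V E} (hsp : Sparse H) {v : V} {d1 d2 : E} (h12 : d1 ≠ d2)
    (hset : incE H v = {d1, d2}) :
    ∃ H' : GainGraph Γ (Option {w : V // w ≠ v})
      ({e : E // H.tail e ≠ v ∧ H.head e ≠ v} ⊕ Fin 2),
      IsH1a (delV H v) H' ∧ GGIso H' H := by
  have hd1 : d1 ∈ incE H v := by rw [hset]; simp
  have hd2 : d2 ∈ incE H v := by rw [hset]; simp
  have hi1 := mem_incE.1 hd1
  have hi2 := mem_incE.1 hd2
  have ha : othV H v d1 ≠ v := othV_ne hsp hi1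
  have hb : othV H v d2 ≠ v := othV_ne hsp hi2
  have hab : othV H v d1 ≠ othV H v d2 := othV_injOn hsp hi1 hi2 h12
  refine ⟨⟨Sum.elim (fun e => some ((delV H v).tail e))
      (![some ⟨othV H v d1, ha⟩, some ⟨othV H v d2, hb⟩]),
    Sum.elim (fun e => some ((delV H v).head e)) (fun _ => none),
    Sum.elim (fun e => (delV H v).gain e) (![othG H v d1, othG H v d2])⟩, ?_, ?_⟩
  · refine ⟨fun e => ⟨rfl, rfl, rfl⟩, fun i => rfl,
      ⟨othV H v d1, ha⟩, ⟨othV H v d2, hb⟩,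
      fun h => hab (congrArg Subtype.val h), rfl, rfl⟩
  · -- the iso back to H
    have hφbij : Function.Bijective
        (Sum.elim (Subtype.val : {e : E // H.tail e ≠ v ∧ H.head e ≠ v} → E)
          (![d1, d2]) : _ ⊕ Fin 2 → E) := by
      constructor
      · rintro (e | i) (f | j) h
        · have : e = f := Subtype.ext h
          subst this; rfl
        · exfalso
          simp only [Sum.elim_inl, Sum.elim_inr] at h
          have hj : H.tail (![d1, d2] j) = v ∨ H.head (![d1, d2] j) = v := by
            fin_cases j; exacts [hi1, hi2]
          rw [← h] at hj
          rcases hj with hj | hj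
          · exact e.2.1 hj
          · exact e.2.2 hj
        · exfalso
          simp only [Sum.elim_inl, Sum.elim_inr] at h
          have hj : H.tail (![d1, d2] i) = v ∨ H.head (![d1, d2] i) = v := by
            fin_cases i; exacts [hi1, hi2]
          rw [h] at hj
          rcases hj with hj | hj
          · exact f.2.1 hj
          · exact f.2.2 hj
        · simp only [Sum.elim_inr] at h
          fin_cases i <;> fin_cases j
          · rfl
          · exact absurd h h12
          · exact absurd h.symm h12
          · rfl
      · intro e
        by_cases he : e ∈ incE H v
        · rw [hset] at he
          rcases Finset.mem_insert.1 he with rfl | he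
          · exact ⟨Sum.inr 0, rfl⟩
          · rw [Finset.mem_singleton] at he
            subst he
            exact ⟨Sum.inr 1, rfl⟩
        · rw [mem_incE] at he
          push_neg at he
          exact ⟨Sum.inl ⟨e, he⟩, rfl⟩
    refine ⟨Equiv.optionSubtypeNe v, Equiv.ofBijective _ hφbij, ?_⟩
    rintro (e | i)
    · exact Or.inl ⟨rfl, rfl, rfl⟩
    · fin_cases i
      · exact edgeIs_oth hi1
      · exact edgeIs_oth hi2


lemma deg3_step {Γ : Type} [Group Γ] {V E : Type} [Fintype V] [Fintype E]
    [DecidableEq V] [DecidableEq E]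
    {H : GainGraph Γ V E} (hsp : Sparse H)
    (hcount : (Fintype.card E : ℤ) = 2 * (Fintype.card V : ℤ) - 3)
    {v : V} {d1 d2 d3 : E} (h12 : d1 ≠ d2) (h13 : d1 ≠ d3) (h23 : d2 ≠ d3)
    (hset : incE H v = {d1, d2, d3})
    (hnb : ¬ Blocked H v (othV H v d1) (othV H v d2)) :
    ∃ H₁ : GainGraph Γ {w : V // w ≠ v} ({e : E // H.tail e ≠ v ∧ H.head e ≠ v} ⊕ Unit),
      H₁.GainTight 2 3 3 ∧
      ∃ (e₀ : {e : E // H.tail e ≠ v ∧ H.head e ≠ v} ⊕ Unit) (z : {w : V // w ≠ v})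
        (H' : GainGraph Γ (Option {w : V // w ≠ v})
          ({f : {e : E // H.tail e ≠ v ∧ H.head e ≠ v} ⊕ Unit // f ≠ e₀} ⊕ Fin 3)),
        IsH2a H₁ e₀ z H' ∧ GGIso H' H := by
  classical
  have hd1 : d1 ∈ incE H v := by rw [hset]; simp
  have hd2 : d2 ∈ incE H v := by rw [hset]; simp
  have hd3 : d3 ∈ incE H v := by rw [hset]; simp
  have hi1 := mem_incE.1 hd1
  have hi2 := mem_incE.1 hd2
  have hi3 := mem_incE.1 hd3
  have ha : othV H v d1 ≠ v := othV_ne hsp hi1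
  have hb : othV H v d2 ≠ v := othV_ne hsp hi2
  have hc : othV H v d3 ≠ v := othV_ne hsp hi3
  have hab := othV_injOn hsp hi1 hi2 h12
  have hac := othV_injOn hsp hi1 hi3 h13
  have hbc := othV_injOn hsp hi2 hi3 h23
  set H₁ : GainGraph Γ {w : V // w ≠ v} ({e : E // H.tail e ≠ v ∧ H.head e ≠ v} ⊕ Unit) :=
    ⟨Sum.elim (delV H v).tail (fun _ => ⟨othV H v d1, ha⟩),
     Sum.elim (delV H v).head (fun _ => ⟨othV H v d2, hb⟩),
     Sum.elim (delV H v).gain (fun _ => othG H v d1 * (othG H v d2)⁻¹)⟩ with hH₁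
  have hcv : Fintype.card {w : V // w ≠ v} = Fintype.card V - 1 := by
    have h1 := Fintype.card_subtype_compl (fun w : V => w = v)
    rw [Fintype.card_subtype_eq v] at h1
    exact h1
  have hVpos : 1 ≤ Fintype.card V := Fintype.card_pos_iff.2 ⟨v⟩
  have hinc3 : (incE H v).card = 3 := by
    rw [hset, Finset.card_insert_of_notMem (by simp [h12, h13]), Finset.card_pair h23]
  have hce : Fintype.card {e : E // H.tail e ≠ v ∧ H.head e ≠ v}
      = Fintype.card E - 3 := by
    rw [Fintype.card_subtype]
    have heq : (Finset.univ.filter fun e : E => H.tail e ≠ v ∧ H.head e ≠ v)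
        = Finset.univ \ incE H v := by
      ext e
      simp [incE, not_or]
    rw [heq, Finset.card_sdiff_of_subset (Finset.subset_univ _), Finset.card_univ, hinc3]
  have hE3 : 3 ≤ Fintype.card E := by
    rw [← hinc3]
    exact Finset.card_le_univ _
  have hsp₁ : Sparse H₁ := by
    intro F₁ hF₁
    set FL := F₁.toLeft with hFL
    set FR := F₁.toRight with hFR
    have hcards : FL.card + FR.card = F₁.card := Finset.card_toLeft_add_card_toRight (u := F₁)
    set FE : Finset E := FL.image Subtype.val with hFE
    have hFEcard : FE.card = FL.card := Finset.card_image_of_injective _ Subtype.val_injective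
    set S : Finset V := (H₁.vSpan F₁).image Subtype.val with hS
    have hScard : S.card = (H₁.vSpan F₁).card :=
      Finset.card_image_of_injective _ Subtype.val_injective
    have hFEsub : H.vSpan FE ⊆ S := by
      intro x hx
      rw [mem_vSpan] at hx
      obtain ⟨e, he, hx⟩ := hx
      obtain ⟨f, hf, rfl⟩ := Finset.mem_image.1 he
      rcases hx with rfl | rfl
      · exact Finset.mem_image.2 ⟨H₁.tail (Sum.inl f),
          mem_vSpan.2 ⟨Sum.inl f, Finset.mem_toLeft.1 hf, Or.inl rfl⟩, rfl⟩
      · exact Finset.mem_image.2 ⟨H₁.head (Sum.inl f),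
          mem_vSpan.2 ⟨Sum.inl f, Finset.mem_toLeft.1 hf, Or.inr rfl⟩, rfl⟩
    have hFEav : ∀ e ∈ FE, H.tail e ≠ v ∧ H.head e ≠ v := by
      intro e he
      obtain ⟨f, _, rfl⟩ := Finset.mem_image.1 he
      exact f.2
    have hsle := Finset.card_le_card hFEsub
    by_cases hinr : (Sum.inr () : {e : E // H.tail e ≠ v ∧ H.head e ≠ v} ⊕ Unit) ∈ F₁
    · have haS : othV H v d1 ∈ S :=
        Finset.mem_image.2 ⟨H₁.tail (Sum.inr ()),
          mem_vSpan.2 ⟨Sum.inr (), hinr, Or.inl rfl⟩, rfl⟩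
      have hbS : othV H v d2 ∈ S :=
        Finset.mem_image.2 ⟨H₁.head (Sum.inr ()),
          mem_vSpan.2 ⟨Sum.inr (), hinr, Or.inr rfl⟩, rfl⟩
      have hFR1 : FR.card = 1 := by
        have h1 : FR = {()} := Finset.eq_singleton_iff_unique_mem.2
          ⟨Finset.mem_toRight.2 hinr, fun u _ => Subsingleton.elim u ()⟩
        rw [h1, Finset.card_singleton]
      by_cases hFLne : FL.Nonempty
      · have hFEne : FE.Nonempty := hFLne.image _
        have hspFE := hsp FE hFEne
        by_contra hviol
        push_neg at hviol
        have hSle : S.card ≤ (H.vSpan FE).card := by omega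
        have hSeq : H.vSpan FE = S := Finset.eq_of_subset_of_card_le hFEsub hSle
        refine hnb ⟨FE, hFEav, hFEne, ?_, ?_, ?_⟩
        · rw [hSeq]; exact haS
        · rw [hSeq]; exact hbS
        · unfold Tight
          have hq : (H.vSpan FE).card = S.card := by rw [hSeq]
          omega
      · have hFL0 : FL.card = 0 := by
          simp [Finset.not_nonempty_iff_eq_empty.1 hFLne]
        have h2 : 2 ≤ S.card := Finset.one_lt_card.2 ⟨_, haS, _, hbS, hab⟩
        omega
    · have hFR0 : FR.card = 0 := by
        rw [Finset.card_eq_zero, Finset.eq_empty_iff_forall_notMem]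
        rintro ⟨⟩ hu
        exact hinr (Finset.mem_toRight.1 hu)
      have hFLne : FL.Nonempty := by
        rw [← Finset.card_pos]
        have := hF₁.card_pos
        omega
      have hspFE := hsp FE (hFLne.image _)
      omega
  have hT₁ : H₁.GainTight 2 3 3 := by
    rw [gainTight_iff_s9]
    refine ⟨?_, hsp₁⟩
    simp only [Fintype.card_sum, hce, hcv]
    have hu : Fintype.card Unit = 1 := rfl
    rw [hu]
    push_cast
    omega
  refine ⟨H₁, hT₁, Sum.inr (), ⟨othV H v d3, hc⟩,
    ⟨Sum.elim (fun f => some (H₁.tail f.1))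
        (![some ⟨othV H v d1, ha⟩, some ⟨othV H v d2, hb⟩, some ⟨othV H v d3, hc⟩]),
     Sum.elim (fun f => some (H₁.head f.1)) (fun _ => none),
     Sum.elim (fun f => H₁.gain f.1) (![othG H v d1, othG H v d2, othG H v d3])⟩, ?_, ?_⟩
  · refine ⟨fun h => hab (congrArg Subtype.val h),
      fun h => hac (congrArg Subtype.val h).symm,
      fun h => hbc (congrArg Subtype.val h).symm,
      fun f => ⟨rfl, rfl, rfl⟩, fun i => rfl, rfl, rfl, rfl, rfl, ?_⟩
    intro i j hij htl
    simp only [Sum.elim_inr] at htl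
    exfalso
    fin_cases i <;> fin_cases j <;>
      first
        | exact hij rfl
        | exact hab (congrArg Subtype.val (Option.some_injective _ htl))
        | exact hab (congrArg Subtype.val (Option.some_injective _ htl)).symm
        | exact hac (congrArg Subtype.val (Option.some_injective _ htl))
        | exact hac (congrArg Subtype.val (Option.some_injective _ htl)).symm
        | exact hbc (congrArg Subtype.val (Option.some_injective _ htl))
        | exact hbc (congrArg Subtype.val (Option.some_injective _ htl)).symm
  · have hφbij : Function.Bijective (Sum.elim
        (fun f : {f : {e : E // H.tail e ≠ v ∧ H.head e ≠ v} ⊕ Unit // f ≠ Sum.inr ()} =>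
          Sum.elim (Subtype.val) (fun _ => d1) f.1)
        (![d1, d2, d3]) : _ ⊕ Fin 3 → E) := by
      constructor
      · rintro (⟨e | u, hf⟩ | i) (⟨e' | u', hg⟩ | j) h
        · simp only [Sum.elim_inl] at h
          have he : e = e' := Subtype.ext h
          subst he
          rfl
        · cases u'; exact absurd rfl hg
        · exfalso
          simp only [Sum.elim_inl, Sum.elim_inr] at h
          have hj : H.tail (![d1, d2, d3] j) = v ∨ H.head (![d1, d2, d3] j) = v := by
            fin_cases j; exacts [hi1, hi2, hi3]
          rw [← h] at hj
          rcases hj with hj | hj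
          · exact e.2.1 hj
          · exact e.2.2 hj
        · cases u; exact absurd rfl hf
        · cases u; exact absurd rfl hf
        · cases u; exact absurd rfl hf
        · exfalso
          simp only [Sum.elim_inl, Sum.elim_inr] at h
          have hj : H.tail (![d1, d2, d3] i) = v ∨ H.head (![d1, d2, d3] i) = v := by
            fin_cases i; exacts [hi1, hi2, hi3]
          rw [h] at hj
          rcases hj with hj | hj
          · exact e'.2.1 hj
          · exact e'.2.2 hj
        · cases u'; exact absurd rfl hg
        · simp only [Sum.elim_inr] at h
          fin_cases i <;> fin_cases j <;>
            first
              | rfl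
              | exact absurd h h12
              | exact absurd h.symm h12
              | exact absurd h h13
              | exact absurd h.symm h13
              | exact absurd h h23
              | exact absurd h.symm h23
      · intro e
        by_cases he : e ∈ incE H v
        · rw [hset] at he
          simp only [Finset.mem_insert, Finset.mem_singleton] at he
          rcases he with rfl | rfl | rfl
          · exact ⟨Sum.inr 0, rfl⟩
          · exact ⟨Sum.inr 1, rfl⟩
          · exact ⟨Sum.inr 2, rfl⟩
        · rw [mem_incE] at he
          push_neg at he
          exact ⟨Sum.inl ⟨Sum.inl ⟨e, he⟩, by simp⟩, rfl⟩
    refine ⟨Equiv.optionSubtypeNe v, Equiv.ofBijective _ hφbij, ?_⟩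
    rintro (⟨e | u, hf⟩ | i)
    · exact Or.inl ⟨rfl, rfl, rfl⟩
    · cases u; exact absurd rfl hf
    · fin_cases i
      · exact edgeIs_oth hi1
      · exact edgeIs_oth hi2
      · exact edgeIs_oth hi3


lemma forward_constructed {Γ : Type} [Group Γ] :
    ∀ (n : ℕ) (V E : Type) (iV : Fintype V) (iE : Fintype E)
      (dV : DecidableEq V) (dE : DecidableEq E) (H : GainGraph Γ V E),
      Fintype.card V = n → H.GainTight 2 3 3 →
      Constructed (fun X => ∃ g : Γ, GGIso (K2gg g) X.gg)
        (fun X Y => StepH1a X Y ∨ StepH2a X Y) (fun _ _ _ => False) ⟨V, E, H⟩ := by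
  intro n
  induction n using Nat.strong_induction_on with
  | _ n ih =>
  intro V E iV iE dV dE H hn ht
  rw [gainTight_iff_s9] at ht
  obtain ⟨hcount, hsp⟩ := ht
  have hV2 : 2 ≤ Fintype.card V := by
    have h0 : (0 : ℤ) ≤ (Fintype.card E : ℤ) := Int.natCast_nonneg _
    omega
  rcases eq_or_lt_of_le hV2 with hV | hV
  · -- base case : a single edge
    have hE1 : Fintype.card E = 1 := by omega
    obtain ⟨e, he⟩ := Fintype.card_eq_one_iff.1 hE1
    have hloop := sparse_no_loop hsp e
    have hfVbij : Function.Bijective (![H.tail e, H.head e] : Fin 2 → V) := by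
      rw [Fintype.bijective_iff_injective_and_card]
      constructor
      · intro i j hij
        fin_cases i <;> fin_cases j <;>
          first
            | rfl
            | exact absurd hij hloop
            | exact absurd hij.symm hloop
      · rw [Fintype.card_fin]
        omega
    refine Constructed.base_mem ⟨H.gain e, Equiv.ofBijective _ hfVbij,
      Equiv.ofBijective (fun _ : Unit => e)
        ⟨fun p q _ => Subsingleton.elim p q, fun f => ⟨(), (he f).symm⟩⟩, ?_⟩
    intro u
    exact Or.inl ⟨rfl, rfl, rfl⟩
  · -- inductive case
    have hV3 : 3 ≤ Fintype.card V := hV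
    obtain ⟨v, hvdeg⟩ := exists_deg_le_three hcount hsp
    have hv2 := deg_ge_two hcount hsp hV3 v
    have hcv : Fintype.card {w : V // w ≠ v} = Fintype.card V - 1 := by
      have h1 := Fintype.card_subtype_compl (fun w : V => w = v)
      rw [Fintype.card_subtype_eq v] at h1
      exact h1
    have hcnlt : Fintype.card {w : V // w ≠ v} < n := by omega
    have hcn : Fintype.card {w : V // w ≠ v} = Fintype.card V - 1 := hcv
    rcases Nat.eq_or_lt_of_le hv2 with hdeg | hdeg
    · -- degree 2
      obtain ⟨e1, e2, h12, hset⟩ := Finset.card_eq_two.1 hdeg.symm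
      have hce : Fintype.card {e : E // H.tail e ≠ v ∧ H.head e ≠ v}
          = Fintype.card E - 2 := by
        rw [Fintype.card_subtype]
        have heq : (Finset.univ.filter fun e : E => H.tail e ≠ v ∧ H.head e ≠ v)
            = Finset.univ \ incE H v := by
          ext e
          simp [incE, not_or]
        rw [heq, Finset.card_sdiff_of_subset (Finset.subset_univ _), Finset.card_univ, hset,
          Finset.card_pair h12]
      have hEge : 2 ≤ Fintype.card E := by
        have h1 : (incE H v).card ≤ Fintype.card E := Finset.card_le_univ _
        rw [hset, Finset.card_pair h12] at h1
        exact h1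
      have hT₀ : (delV H v).GainTight 2 3 3 := by
        rw [gainTight_iff_s9]
        refine ⟨?_, sparse_delV hsp v⟩
        rw [hce, hcv]
        push_cast
        omega
      obtain ⟨H', hmove, hiso⟩ := deg2_step hsp h12 hset
      have hC := ih _ hcnlt _ _ inferInstance inferInstance inferInstance inferInstance (delV H v) rfl hT₀
      exact Constructed.step_mem hC (Or.inl ⟨H', hmove, hiso⟩)
    · -- degree 3
      have hdeg3 : (incE H v).card = 3 := le_antisymm hvdeg hdeg
      obtain ⟨e1, e2, e3, h12, h13, h23, hset⟩ := Finset.card_eq_three.1 hdeg3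
      have hmain : ∀ d1 d2 d3 : E, d1 ≠ d2 → d1 ≠ d3 → d2 ≠ d3 →
          incE H v = {d1, d2, d3} → ¬ Blocked H v (othV H v d1) (othV H v d2) →
          Constructed (fun X => ∃ g : Γ, GGIso (K2gg g) X.gg)
            (fun X Y => StepH1a X Y ∨ StepH2a X Y) (fun _ _ _ => False) ⟨V, E, H⟩ := by
        intro d1 d2 d3 k12 k13 k23 kset knb
        obtain ⟨H₁, hT₁, e₀, z, H', hmove, hiso⟩ :=
          deg3_step hsp hcount k12 k13 k23 kset knb
        have hC := ih _ hcnlt _ _ inferInstance inferInstance inferInstance inferInstance H₁ rfl hT₁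
        exact Constructed.step_mem hC (Or.inr ⟨e₀, z, H', hmove, hiso⟩)
      by_cases hb1 : Blocked H v (othV H v e1) (othV H v e2)
      · by_cases hb2 : Blocked H v (othV H v e2) (othV H v e3)
        · by_cases hb3 : Blocked H v (othV H v e1) (othV H v e3)
          · exact absurd hb3 (fun hb3 => not_blocked_all hsp
              (mem_incE.1 (by rw [hset]; simp)) (mem_incE.1 (by rw [hset]; simp))
              (mem_incE.1 (by rw [hset]; simp)) h12 h13 h23 hb1 hb2 hb3)
          · refine hmain e1 e3 e2 h13 h12 (Ne.symm h23) ?_ hb3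
            rw [hset]
            ext w
            simp only [Finset.mem_insert, Finset.mem_singleton]
            tauto
        · refine hmain e2 e3 e1 h23 (Ne.symm h12) (Ne.symm h13) ?_ hb2
          rw [hset]
          ext w
          simp only [Finset.mem_insert, Finset.mem_singleton]
          tauto
      · exact hmain e1 e2 e3 h12 h13 h23 hset hb1

end Fwd




end HenPrf





/-- Theorem `thm:233construction`: a quotient gain graph is
`(2,3,3)`-gain-tight if and only if it can be constructed sequentially from `K₂` by
H1a and H2a operations. -/
theorem statement9
    {Γ : Type} [Group Γ] {W V E : Type}
    [Fintype V] [Fintype E] [DecidableEq V] [DecidableEq E]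
    (G : SimpleGraph W) (θ : Γ →* Equiv.Perm W) (hfree : FreeGraphAction G θ)
    (H : GainGraph Γ V E) (hquot : IsQuotientOf G θ H) :
    H.GainTight 2 3 3 ↔
      Constructed (fun X => ∃ g : Γ, GGIso (K2gg g) X.gg)
        (fun X Y => StepH1a X Y ∨ StepH2a X Y)
        (fun _ _ _ => False) ⟨V, E, H⟩ := by
  constructor
  · intro ht
    exact forward_constructed (Fintype.card V) V E inferInstance inferInstance inferInstance inferInstance H rfl ht
  · intro hC
    exact backward_constructed hC _ _ _

end SymSurf
end
end
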